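/- arXiv:1910.10100 — 8 statements merged into one kernel-verified Lean document; each statement's English description precedes it below -/
import Mathlib

section
/- Let A ∈ ℝ^{n×d} be a nonzero matrix with rows a_1,…,a_n, and let S̄ = (S_1,…,S_K) be a partition of {1,…,n} into K pairwise disjoint nonempty blocks. Then the stochastic acceleration factor satisfies Υ(A,S̄,K) := K·L_f/L_b ≥ ‖A‖²/μ_ℓ(A,S̄,K), where L_f := (1/n)‖AᵀA‖, L_b := (K/n)·max_{k∈[K]} ‖(S^k A)ᵀ(S^k A)‖, and μ_ℓ(A,S̄,K) := max_{q∈[K]} max_{j∈S_q} Σ_{k∈S_q} |⟨a_j, a_k⟩|. -/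
/-- Spectral norm of a real matrix: the operator norm of the induced linear map
between Euclidean spaces. -/
noncomputable def specNorm {m n : Type*} [Fintype m] [Fintype n] [DecidableEq n]
    (A : Matrix m n ℝ) : ℝ :=
  ‖LinearMap.toContinuousLinearMap (Matrix.toEuclideanLin A)‖

/-- The row-submatrix of `A` consisting of the rows indexed by `S`. -/
def rowSub {n d : ℕ} (A : Matrix (Fin n) (Fin d) ℝ) (S : Finset (Fin n)) :
    Matrix {i // i ∈ S} (Fin d) ℝ :=
  A.submatrix (fun i => (i : Fin n)) id

open scoped Matrix.Norms.L2Operator in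
lemma specNorm_eq_l2 {m n : Type*} [Fintype m] [Fintype n] [DecidableEq n]
    (A : Matrix m n ℝ) : specNorm A = ‖A‖ := rfl

open Matrix in
open scoped Matrix.Norms.L2Operator in
/-- A Gram-coherence bound on the spectral norm: if every row `j` of `B` satisfies
`∑ k |⟨b_j, b_k⟩| ≤ μ`, then `‖BᵀB‖ ≤ μ`. -/
lemma gram_opNorm_le {m : Type*} [Fintype m] [DecidableEq m] {d : ℕ}
    (B : Matrix m (Fin d) ℝ) {μ : ℝ} (hμ0 : 0 ≤ μ)
    (h : ∀ j : m, ∑ k : m, |∑ l, B j l * B k l| ≤ μ) :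
    ‖Bᴴ * B‖ ≤ μ := by
  have hB : ‖B‖ ≤ Real.sqrt μ := by
    rw [← Matrix.l2_opNorm_conjTranspose, Matrix.l2_opNorm_def]
    apply ContinuousLinearMap.opNorm_le_bound _ (Real.sqrt_nonneg μ)
    intro y
    have hy2 : ‖y‖ ^ 2 = ∑ j, (y j) ^ 2 := by
      rw [EuclideanSpace.norm_eq, Real.sq_sqrt (by positivity)]
      simp [sq_abs]
    have expand : ‖((Matrix.toEuclideanLin).trans LinearMap.toContinuousLinearMap) (Bᴴ) y‖ ^ 2
        = ∑ l, (∑ j, B j l * y j) ^ 2 := by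
      rw [EuclideanSpace.norm_eq, Real.sq_sqrt (by positivity)]
      congr 1
      ext l
      simp [Matrix.toEuclideanLin_apply, Matrix.mulVec, dotProduct,
        Matrix.conjTranspose_apply, sq_abs]
    have key : ∑ l, (∑ j, B j l * y j) ^ 2 ≤ μ * ∑ j, (y j) ^ 2 := by
      have e1 : ∑ l, (∑ j, B j l * y j) ^ 2
          = ∑ j, ∑ k, (y j * y k) * (∑ l, B j l * B k l) := by
        simp_rw [sq, Finset.sum_mul_sum, Finset.mul_sum]
        rw [Finset.sum_comm]
        refine Finset.sum_congr rfl fun j _ => ?_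
        rw [Finset.sum_comm]
        refine Finset.sum_congr rfl fun k _ => Finset.sum_congr rfl fun l _ => by ring
      rw [e1]
      calc ∑ j, ∑ k, (y j * y k) * (∑ l, B j l * B k l)
          ≤ ∑ j, ∑ k, ((y j)^2 + (y k)^2)/2 * |∑ l, B j l * B k l| := by
            refine Finset.sum_le_sum fun j _ => Finset.sum_le_sum fun k _ => ?_
            have h1 : (y j * y k) * (∑ l, B j l * B k l)
                ≤ |y j * y k| * |∑ l, B j l * B k l| := by
              rw [← abs_mul]; exact le_abs_self _
            refine h1.trans (mul_le_mul_of_nonneg_right ?_ (abs_nonneg _))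
            rw [abs_mul]
            nlinarith [sq_nonneg (|y j| - |y k|), sq_abs (y j), sq_abs (y k)]
        _ = ∑ j, (y j)^2 * ∑ k, |∑ l, B j l * B k l| := by
            have swap : ∑ j, ∑ k, (y k)^2 * |∑ l, B j l * B k l|
                = ∑ j, ∑ k, (y j)^2 * |∑ l, B j l * B k l| := by
              rw [Finset.sum_comm]
              refine Finset.sum_congr rfl fun j _ => Finset.sum_congr rfl fun k _ => ?_
              congr 2
              exact Finset.sum_congr rfl fun l _ => mul_comm _ _
            calc ∑ j, ∑ k, ((y j)^2 + (y k)^2)/2 * |∑ l, B j l * B k l|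
                = (∑ j, ∑ k, (y j)^2 * |∑ l, B j l * B k l|)/2
                    + (∑ j, ∑ k, (y k)^2 * |∑ l, B j l * B k l|)/2 := by
                  have h2 : ∀ a b c : ℝ, (a+b)/2*c = a*c/2 + b*c/2 := fun a b c => by ring
                  simp_rw [h2, Finset.sum_add_distrib, Finset.sum_div]
              _ = ∑ j, (y j)^2 * ∑ k, |∑ l, B j l * B k l| := by
                  rw [swap, add_halves]
                  simp_rw [Finset.mul_sum]
        _ ≤ ∑ j, (y j)^2 * μ := Finset.sum_le_sum fun j _ =>
            mul_le_mul_of_nonneg_left (h j) (sq_nonneg _)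
        _ = μ * ∑ j, (y j)^2 := by rw [← Finset.sum_mul]; ring
    have hnn : (0:ℝ) ≤ Real.sqrt μ * ‖y‖ := by positivity
    have := expand ▸ key
    nlinarith [norm_nonneg (((Matrix.toEuclideanLin).trans LinearMap.toContinuousLinearMap) (Bᴴ) y),
      Real.sq_sqrt hμ0, Real.sqrt_nonneg μ, norm_nonneg y, sq_nonneg (‖y‖)]
  calc ‖Bᴴ * B‖ = ‖B‖ * ‖B‖ := Matrix.l2_opNorm_conjTranspose_mul_self B
    _ ≤ Real.sqrt μ * Real.sqrt μ :=
        mul_le_mul hB hB (norm_nonneg _) (Real.sqrt_nonneg _)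
    _ = μ := Real.mul_self_sqrt hμ0

open Matrix in
open scoped Matrix.Norms.L2Operator in
lemma real_conjTranspose_eq_transpose {m n : Type*} (A : Matrix m n ℝ) : Aᴴ = Aᵀ := by
  ext i j; simp [Matrix.conjTranspose_apply]

/-- For a nonzero `A ∈ ℝ^{n×d}` and a partition `S̄ = (S_1, …, S_K)`
of `[n]` into pairwise disjoint nonempty blocks, the stochastic acceleration factor
`Υ(A,S̄,K) = K·L_f/L_b` with `L_f = (1/n)‖AᵀA‖` and
`L_b = (K/n)·max_k ‖(SᵏA)ᵀ(SᵏA)‖` satisfies `Υ(A,S̄,K) ≥ ‖A‖²/μ_ℓ(A,S̄,K)`,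
where `μ_ℓ(A,S̄,K) = max_q max_{j ∈ S_q} Σ_{k ∈ S_q} |⟨a_j, a_k⟩|`. -/
theorem SA_ge_specNorm_sq_div_local_coherence {n d K : ℕ} (hn : 0 < n) (hK : 0 < K)
    (A : Matrix (Fin n) (Fin d) ℝ) (hA : A ≠ 0)
    (S : Fin K → Finset (Fin n))
    (hdisj : ∀ k l : Fin K, k ≠ l → Disjoint (S k) (S l))
    (hcover : (Finset.univ : Finset (Fin K)).biUnion S = Finset.univ)
    (hne : ∀ k, (S k).Nonempty) :
    (K : ℝ) * (specNorm (A.transpose * A) / n) /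
        ((K : ℝ) / n *
          Finset.univ.sup' ⟨⟨0, hK⟩, Finset.mem_univ _⟩
            (fun k => specNorm ((rowSub A (S k)).transpose * rowSub A (S k)))) ≥
      specNorm A ^ 2 /
        Finset.univ.sup' ⟨⟨0, hK⟩, Finset.mem_univ _⟩
          (fun q => (S q).sup' (hne q) fun j => ∑ k ∈ S q, |∑ l, A j l * A k l|) := by
  classical
  open Matrix in
  open scoped Matrix.Norms.L2Operator in
  set μ : ℝ := Finset.univ.sup' ⟨⟨0, hK⟩, Finset.mem_univ _⟩
      (fun q => (S q).sup' (hne q) fun j => ∑ k ∈ S q, |∑ l, A j l * A k l|) with hμdef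
  set M : ℝ := Finset.univ.sup' ⟨⟨0, hK⟩, Finset.mem_univ _⟩
      (fun k => specNorm ((rowSub A (S k)).transpose * rowSub A (S k))) with hMdef
  have hμ0 : 0 ≤ μ := by
    obtain ⟨j, hj⟩ := hne ⟨0, hK⟩
    refine le_trans ?_ (Finset.le_sup' _ (Finset.mem_univ ⟨0, hK⟩))
    refine le_trans ?_
      (Finset.le_sup' (f := fun j => ∑ k' ∈ S ⟨0, hK⟩, |∑ l, A j l * A k' l|) hj)
    positivity
  -- each block spectral norm is bounded by μ
  have hblock : ∀ k : Fin K,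
      specNorm ((rowSub A (S k)).transpose * rowSub A (S k)) ≤ μ := by
    intro k
    rw [specNorm_eq_l2, ← real_conjTranspose_eq_transpose]
    apply gram_opNorm_le _ hμ0
    rintro ⟨j, hj⟩
    have hsum : ∑ k' : {i // i ∈ S k}, |∑ l, rowSub A (S k) ⟨j, hj⟩ l * rowSub A (S k) k' l|
        = ∑ k' ∈ S k, |∑ l, A j l * A k' l| := by
      rw [← Finset.sum_coe_sort (S k) (fun k' => |∑ l, A j l * A k' l|)]
      rfl
    rw [hsum]
    refine le_trans (Finset.le_sup' (f := fun j => ∑ k' ∈ S k, |∑ l, A j l * A k' l|) hj) ?_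
    exact Finset.le_sup'
      (f := fun q => (S q).sup' (hne q) fun j => ∑ k' ∈ S q, |∑ l, A j l * A k' l|)
      (Finset.mem_univ k)
  have hMμ : M ≤ μ := by
    rw [hMdef]
    exact Finset.sup'_le _ _ fun k _ => hblock k
  -- positivity of M
  have hM0 : 0 < M := by
    obtain ⟨i, l, hil⟩ : ∃ i l, A i l ≠ 0 := by
      by_contra hcon
      push_neg at hcon
      exact hA (by ext i l; exact hcon i l)
    obtain ⟨k, hik⟩ : ∃ k : Fin K, i ∈ S k := by
      have : i ∈ (Finset.univ : Finset (Fin K)).biUnion S := hcover ▸ Finset.mem_univ i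
      obtain ⟨k, _, hk⟩ := Finset.mem_biUnion.mp this
      exact ⟨k, hk⟩
    have hBne : rowSub A (S k) ≠ 0 := by
      intro h0
      apply hil
      have := congrFun (congrFun h0 ⟨i, hik⟩) l
      simpa [rowSub, Matrix.submatrix_apply] using this
    have hpos : 0 < specNorm ((rowSub A (S k)).transpose * rowSub A (S k)) := by
      rw [specNorm_eq_l2, ← real_conjTranspose_eq_transpose,
        Matrix.l2_opNorm_conjTranspose_mul_self]
      have : (0:ℝ) < ‖rowSub A (S k)‖ := norm_pos_iff.mpr hBne
      positivity
    exact lt_of_lt_of_le hpos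
      (Finset.le_sup'
        (f := fun k => specNorm ((rowSub A (S k)).transpose * rowSub A (S k)))
        (Finset.mem_univ k))
  -- the key spectral identity
  have hX : specNorm (A.transpose * A) = specNorm A ^ 2 := by
    rw [specNorm_eq_l2, specNorm_eq_l2, ← real_conjTranspose_eq_transpose,
      Matrix.l2_opNorm_conjTranspose_mul_self, sq]
  have hn' : (n : ℝ) ≠ 0 := Nat.cast_ne_zero.mpr hn.ne'
  have hK' : (K : ℝ) ≠ 0 := Nat.cast_ne_zero.mpr hK.ne'
  have hLHS : (K : ℝ) * (specNorm (A.transpose * A) / n) / ((K : ℝ) / n * M)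
      = specNorm (A.transpose * A) / M := by
    field_simp
  rw [ge_iff_le, hLHS, hX]
  exact div_le_div_of_nonneg_left (by positivity) hM0 hMμ
end

section
/- Let A ∈ ℝ^{n×d} be a nonzero matrix with rows a_1,…,a_n, let S̄ = (S_1,…,S_K) be a partition of {1,…,n} into K pairwise disjoint blocks, each of equal size m = n/K, and suppose ρ ≥ 1 satisfies max_{i∈[n]} ‖a_i‖₂² ≤ ρ·(1/n)·Σ_{j=1}^n ‖a_j‖₂². Then Υ(A,S̄,K) := K·L_f/L_b ≥ K·σ(AᵀA,1)/(ρ·Σ_{i=1}^d σ(AᵀA,i)), where L_f := (1/n)‖AᵀA‖, L_b := (K/n)·max_{k∈[K]} ‖(S^k A)ᵀ(S^k A)‖, and σ(H,k) denotes the k-th largest eigenvalue of a real symmetric matrix H. -/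
/-- `kthEigen H k` is the `k`-th largest eigenvalue of a real symmetric matrix `H`
(for `1 ≤ k`), with the convention that it is `0` when `k` exceeds the dimension
(or when `H` is not symmetric). -/
noncomputable def kthEigen {d : ℕ} (H : Matrix (Fin d) (Fin d) ℝ) (k : ℕ) : ℝ :=
  letI := Classical.dec H.IsHermitian
  if h : H.IsHermitian then
    ((Finset.univ.val.map h.eigenvalues).sort (· ≤ ·)).reverse.getD (k - 1) 0
  else 0

/-! ### Auxiliary lemmas -/

lemma specNorm_le_sqrt {p q : Type*} [Fintype p] [Fintype q] [DecidableEq q]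
    (M : Matrix p q ℝ) : specNorm M ≤ Real.sqrt (∑ i, ∑ j, (M i j)^2) := by
  apply ContinuousLinearMap.opNorm_le_bound _ (Real.sqrt_nonneg _)
  intro x
  have hx : ‖x‖ = Real.sqrt (∑ j, (x j)^2) := by
    rw [EuclideanSpace.norm_eq]
    congr 1; apply Finset.sum_congr rfl; intro j _; rw [Real.norm_eq_abs, sq_abs]
  have hTx : ‖(LinearMap.toContinuousLinearMap (Matrix.toEuclideanLin M)) x‖
      = Real.sqrt (∑ i, (M.mulVec x i)^2) := by
    rw [EuclideanSpace.norm_eq]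
    congr 1; apply Finset.sum_congr rfl; intro i _
    rw [Real.norm_eq_abs, sq_abs]
    rfl
  rw [hTx, hx, ← Real.sqrt_mul (by positivity)]
  apply Real.sqrt_le_sqrt
  rw [Finset.sum_mul]
  apply Finset.sum_le_sum
  intro i _
  calc (M.mulVec x i)^2 = (∑ j, M i j * x j)^2 := rfl
    _ ≤ (∑ j, (M i j)^2) * ∑ j, (x j)^2 :=
        Finset.sum_mul_sq_le_sq_mul_sq _ _ _

lemma specNorm_mul_le {p q r : Type*} [Fintype p] [Fintype q] [Fintype r]
    [DecidableEq q] [DecidableEq r] (M : Matrix p q ℝ) (N : Matrix q r ℝ) :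
    specNorm (M * N) ≤ specNorm M * specNorm N := by
  have h : LinearMap.toContinuousLinearMap (Matrix.toEuclideanLin (M * N)) =
      (LinearMap.toContinuousLinearMap (Matrix.toEuclideanLin M)).comp
        (LinearMap.toContinuousLinearMap (Matrix.toEuclideanLin N)) := by
    ext x
    simp [Matrix.toEuclideanLin_eq_toLin, Matrix.toLin_mul _ (PiLp.basisFun 2 ℝ q)]
  rw [specNorm, h]
  exact ContinuousLinearMap.opNorm_comp_le _ _

lemma specNorm_pos {p q : Type*} [Fintype p] [Fintype q] [DecidableEq q]
    {M : Matrix p q ℝ} (h : M ≠ 0) : 0 < specNorm M := by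
  rw [specNorm, norm_pos_iff]
  intro hc
  apply h
  have : Matrix.toEuclideanLin M = 0 := by
    apply LinearMap.toContinuousLinearMap.injective
    simpa using hc
  exact Matrix.toEuclideanLin.injective (by simpa using this)

lemma eigen_le_specNorm {d : ℕ} {H : Matrix (Fin d) (Fin d) ℝ} (h : H.IsHermitian)
    (i : Fin d) : h.eigenvalues i ≤ specNorm H := by
  set v := h.eigenvectorBasis i with hv
  have hnv : ‖v‖ = 1 := h.eigenvectorBasis.orthonormal.1 i
  have h1 : Matrix.toEuclideanLin H v = h.eigenvalues i • v := by
    apply (WithLp.equiv 2 _).injective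
    simpa [Matrix.toEuclideanLin_apply] using h.mulVec_eigenvectorBasis i
  have h2 : ‖(LinearMap.toContinuousLinearMap (Matrix.toEuclideanLin H)) v‖
      ≤ specNorm H * ‖v‖ := ContinuousLinearMap.le_opNorm _ _
  rw [LinearMap.coe_toContinuousLinearMap'] at h2
  rw [h1, norm_smul, hnv, mul_one, mul_one, Real.norm_eq_abs] at h2
  exact (le_abs_self _).trans h2

lemma list_sum_getD (L : List ℝ) : ∑ i ∈ Finset.range L.length, L.getD i 0 = L.sum := by
  induction L with
  | nil => simp
  | cons a t ih =>
    rw [List.length_cons, Finset.sum_range_succ']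
    simp only [List.getD_cons_succ, List.getD_cons_zero, List.sum_cons, ih]
    ring

lemma kthEigen_def {d : ℕ} {H : Matrix (Fin d) (Fin d) ℝ} (h : H.IsHermitian) (k : ℕ) :
    kthEigen H k =
      ((Finset.univ.val.map h.eigenvalues).sort (· ≤ ·)).reverse.getD (k - 1) 0 := by
  rw [kthEigen]
  exact dif_pos h

lemma length_eigenList {d : ℕ} {H : Matrix (Fin d) (Fin d) ℝ} (h : H.IsHermitian) :
    ((Finset.univ.val.map h.eigenvalues).sort (· ≤ ·)).reverse.length = d := by
  simp [Multiset.length_sort]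

lemma sum_kthEigen {d : ℕ} {H : Matrix (Fin d) (Fin d) ℝ} (h : H.IsHermitian) :
    ∑ i ∈ Finset.Icc 1 d, kthEigen H i = ∑ i, h.eigenvalues i := by
  set L := ((Finset.univ.val.map h.eigenvalues).sort (· ≤ ·)).reverse with hL
  have hlen : L.length = d := length_eigenList h
  have h1 : ∑ i ∈ Finset.Icc 1 d, kthEigen H i = ∑ i ∈ Finset.range d, L.getD i 0 := by
    rw [show Finset.Icc 1 d = Finset.Ico 1 (d+1) by rfl, Finset.sum_Ico_eq_sum_range]
    simp only [Nat.add_sub_cancel]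
    apply Finset.sum_congr rfl
    intro i _
    rw [kthEigen_def h]
    congr 1
    omega
  have h2 := list_sum_getD L
  rw [hlen] at h2
  rw [h1, h2]
  rw [hL, List.sum_reverse]
  rw [show ((Finset.univ.val.map h.eigenvalues).sort (· ≤ ·)).sum
      = ((↑((Finset.univ.val.map h.eigenvalues).sort (· ≤ ·)) : Multiset ℝ)).sum by simp,
    Multiset.sort_eq]
  rfl

lemma kthEigen_one_mem {d : ℕ} {H : Matrix (Fin d) (Fin d) ℝ} (h : H.IsHermitian)
    (hd : 0 < d) : ∃ i, kthEigen H 1 = h.eigenvalues i := by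
  set L := ((Finset.univ.val.map h.eigenvalues).sort (· ≤ ·)).reverse with hL
  have hlen : L.length = d := length_eigenList h
  have h0 : (0 : ℕ) < L.length := by omega
  have hmem : L.getD 0 0 ∈ L := by
    rw [L.getD_eq_getElem 0 h0]
    exact List.getElem_mem h0
  rw [hL, List.mem_reverse, Multiset.mem_sort, Multiset.mem_map] at hmem
  obtain ⟨i, _, hi⟩ := hmem
  refine ⟨i, ?_⟩
  rw [kthEigen_def h]
  simpa using hi.symm

lemma sum_eigen_eq_trace {d : ℕ} {H : Matrix (Fin d) (Fin d) ℝ} (h : H.IsHermitian) :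
    ∑ i, h.eigenvalues i = H.trace := by
  have hspec := h.spectral_theorem
  have hU : (star (h.eigenvectorUnitary : Matrix (Fin d) (Fin d) ℝ)) *
      (h.eigenvectorUnitary : Matrix (Fin d) (Fin d) ℝ) = 1 :=
    (Unitary.mem_iff.mp h.eigenvectorUnitary.2).1
  calc ∑ i, h.eigenvalues i
      = (Matrix.diagonal (RCLike.ofReal ∘ h.eigenvalues) :
          Matrix (Fin d) (Fin d) ℝ).trace := by
        rw [Matrix.trace_diagonal]; simp
    _ = H.trace := by
        conv_rhs => rw [hspec]
        rw [Unitary.conjStarAlgAut_apply, Matrix.trace_mul_cycle, hU, Matrix.one_mul]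

/-- For a nonzero `A ∈ ℝ^{n×d}` with balanced rows
(`max_i ‖a_i‖₂² ≤ ρ·(1/n)·Σ_j ‖a_j‖₂²`, `ρ ≥ 1`) and a partition of `[n]` into `K`
pairwise disjoint blocks of equal size `m = n/K`, the stochastic acceleration factor
`Υ(A,S̄,K) = K·L_f/L_b` satisfies
`Υ(A,S̄,K) ≥ K·σ(AᵀA,1)/(ρ·Σ_{i=1}^d σ(AᵀA,i))`. -/
theorem SA_ge_spectral_bound {n d K m : ℕ} (hn : 0 < n) (hK : 0 < K)
    (A : Matrix (Fin n) (Fin d) ℝ) (hA : A ≠ 0)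
    (S : Fin K → Finset (Fin n))
    (hdisj : ∀ k l : Fin K, k ≠ l → Disjoint (S k) (S l))
    (hcover : (Finset.univ : Finset (Fin K)).biUnion S = Finset.univ)
    (hcard : ∀ k, (S k).card = m) (hnKm : n = K * m)
    (ρ : ℝ) (hρ : 1 ≤ ρ)
    (hbal : Finset.univ.sup' ⟨⟨0, hn⟩, Finset.mem_univ _⟩ (fun i => ∑ l, (A i l) ^ 2) ≤
      ρ * ((1 / (n : ℝ)) * ∑ j, ∑ l, (A j l) ^ 2)) :
    (K : ℝ) * (specNorm (A.transpose * A) / n) /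
        ((K : ℝ) / n *
          Finset.univ.sup' ⟨⟨0, hK⟩, Finset.mem_univ _⟩
            (fun k => specNorm ((rowSub A (S k)).transpose * rowSub A (S k)))) ≥
      (K : ℝ) * kthEigen (A.transpose * A) 1 /
        (ρ * ∑ i ∈ Finset.Icc 1 d, kthEigen (A.transpose * A) i) := by
  classical
  -- basic positivity facts
  have hd : 0 < d := by
    rcases Nat.eq_zero_or_pos d with h0 | h
    · exfalso; apply hA; subst h0; ext i l; exact l.elim0
    · exact h
  have hm : 0 < m := by
    rcases Nat.eq_zero_or_pos m with h0 | h
    · subst h0; omega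
    · exact h
  have hn' : (0 : ℝ) < n := by exact_mod_cast hn
  have hK' : (0 : ℝ) < K := by exact_mod_cast hK
  have hm' : (0 : ℝ) < m := by exact_mod_cast hm
  have hnKm' : (n : ℝ) = (K : ℝ) * m := by exact_mod_cast hnKm
  -- Hermitian / PSD structure of AᵀA
  have hAT : A.conjTranspose = A.transpose := Matrix.conjTranspose_eq_transpose_of_trivial A
  have hHerm : (A.transpose * A).IsHermitian := by
    rw [← hAT]; exact Matrix.isHermitian_conjTranspose_mul_self A
  have hPSD : (A.transpose * A).PosSemidef := by
    rw [← hAT]; exact Matrix.posSemidef_conjTranspose_mul_self A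
  -- the total energy T
  set T : ℝ := ∑ j, ∑ l, (A j l) ^ 2 with hTdef
  obtain ⟨j₀, l₀, hjl⟩ : ∃ j l, A j l ≠ 0 := by
    by_contra hc
    push_neg at hc
    exact hA (by ext j l; exact hc j l)
  have hT : 0 < T := by
    apply Finset.sum_pos'
    · intro j _; exact Finset.sum_nonneg fun l _ => sq_nonneg _
    · refine ⟨j₀, Finset.mem_univ _, ?_⟩
      apply Finset.sum_pos'
      · intro l _; exact sq_nonneg _
      · exact ⟨l₀, Finset.mem_univ _, (sq_nonneg _).lt_of_ne (Ne.symm (pow_ne_zero 2 hjl))⟩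
  -- trace of AᵀA equals T
  have htr : (A.transpose * A).trace = T := by
    calc (A.transpose * A).trace = ∑ l, ∑ j, (A j l) ^ 2 := by
          simp [Matrix.trace, Matrix.diag, Matrix.mul_apply, sq]
      _ = T := Finset.sum_comm
  -- sum of the ordered eigenvalues equals T
  have hsum : ∑ i ∈ Finset.Icc 1 d, kthEigen (A.transpose * A) i = T :=
    (sum_kthEigen hHerm).trans ((sum_eigen_eq_trace hHerm).trans htr)
  -- the top eigenvalue: nonnegative and below the spectral norm
  obtain ⟨i₁, hi₁⟩ := kthEigen_one_mem hHerm hd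
  have hσ0 : 0 ≤ kthEigen (A.transpose * A) 1 := by
    rw [hi₁]; exact hPSD.eigenvalues_nonneg i₁
  have hσP : kthEigen (A.transpose * A) 1 ≤ specNorm (A.transpose * A) := by
    rw [hi₁]; exact eigen_le_specNorm hHerm i₁
  -- bound on each block
  have hblock : ∀ k : Fin K,
      specNorm ((rowSub A (S k)).transpose * rowSub A (S k)) ≤ ρ * T / K := by
    intro k
    set M : Matrix {i // i ∈ S k} (Fin d) ℝ := rowSub A (S k) with hM
    set SM : ℝ := ∑ i, ∑ l, (M i l) ^ 2 with hSM
    have hSMnn : 0 ≤ SM := Finset.sum_nonneg fun i _ => Finset.sum_nonneg fun l _ => sq_nonneg _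
    have ha : specNorm M ≤ Real.sqrt SM := specNorm_le_sqrt M
    have hb : specNorm M.transpose ≤ Real.sqrt SM := by
      have h1 := specNorm_le_sqrt M.transpose
      have h2 : ∑ l, ∑ i, (M.transpose l i) ^ 2 = SM := by
        rw [Finset.sum_comm]
        rfl
      rwa [h2] at h1
    have hc : specNorm (M.transpose * M) ≤ SM := by
      calc specNorm (M.transpose * M) ≤ specNorm M.transpose * specNorm M :=
            specNorm_mul_le _ _
        _ ≤ Real.sqrt SM * Real.sqrt SM := by
            apply mul_le_mul hb ha (norm_nonneg _) (Real.sqrt_nonneg _)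
        _ = SM := Real.mul_self_sqrt hSMnn
    have hSMeq : SM = ∑ i ∈ S k, ∑ l, (A i l) ^ 2 :=
      Finset.sum_coe_sort (S k) (fun i => ∑ l, (A i l) ^ 2)
    have hrow : ∀ i ∈ S k, ∑ l, (A i l) ^ 2 ≤ ρ * ((1 / (n : ℝ)) * T) := by
      intro i _
      exact le_trans (Finset.le_sup' (fun i => ∑ l, (A i l) ^ 2) (Finset.mem_univ i)) hbal
    have hSMle : SM ≤ (m : ℝ) * (ρ * ((1 / (n : ℝ)) * T)) := by
      rw [hSMeq]
      calc ∑ i ∈ S k, ∑ l, (A i l) ^ 2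
          ≤ ∑ _i ∈ S k, ρ * ((1 / (n : ℝ)) * T) := Finset.sum_le_sum hrow
        _ = (m : ℝ) * (ρ * ((1 / (n : ℝ)) * T)) := by
            rw [Finset.sum_const, hcard k, nsmul_eq_mul]
    have heq : (m : ℝ) * (ρ * ((1 / (n : ℝ)) * T)) = ρ * T / K := by
      rw [hnKm']
      field_simp
    calc specNorm (M.transpose * M) ≤ SM := hc
      _ ≤ (m : ℝ) * (ρ * ((1 / (n : ℝ)) * T)) := hSMle
      _ = ρ * T / K := heq
  -- positivity of the sup' of block spectral norms
  have hDpos : 0 < Finset.univ.sup' ⟨⟨0, hK⟩, Finset.mem_univ _⟩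
      (fun k => specNorm ((rowSub A (S k)).transpose * rowSub A (S k))) := by
    have hj₀ : j₀ ∈ (Finset.univ : Finset (Fin K)).biUnion S := by
      rw [hcover]; exact Finset.mem_univ _
    obtain ⟨k, -, hkmem⟩ := Finset.mem_biUnion.mp hj₀
    have hMne : (rowSub A (S k)).transpose * rowSub A (S k) ≠ 0 := by
      intro h0
      have hdiag : ((rowSub A (S k)).transpose * rowSub A (S k)) l₀ l₀ = 0 := by
        rw [h0]; rfl
      have hpos : 0 < ((rowSub A (S k)).transpose * rowSub A (S k)) l₀ l₀ := by
        have : ((rowSub A (S k)).transpose * rowSub A (S k)) l₀ l₀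
            = ∑ i : {i // i ∈ S k}, (A (i : Fin n) l₀) ^ 2 := by
          simp [Matrix.mul_apply, rowSub, sq]
        rw [this]
        apply Finset.sum_pos'
        · intro i _; exact sq_nonneg _
        · exact ⟨⟨j₀, hkmem⟩, Finset.mem_univ _,
            (sq_nonneg _).lt_of_ne (Ne.symm (pow_ne_zero 2 hjl))⟩
      rw [hdiag] at hpos
      exact lt_irrefl 0 hpos
    exact lt_of_lt_of_le (specNorm_pos hMne) (Finset.le_sup' (fun k => specNorm ((rowSub A (S k)).transpose * rowSub A (S k))) (Finset.mem_univ k))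
  have hKD : (K : ℝ) * Finset.univ.sup' ⟨⟨0, hK⟩, Finset.mem_univ _⟩
      (fun k => specNorm ((rowSub A (S k)).transpose * rowSub A (S k))) ≤ ρ * T := by
    have := Finset.sup'_le ⟨⟨0, hK⟩, Finset.mem_univ _⟩
      (fun k => specNorm ((rowSub A (S k)).transpose * rowSub A (S k)))
      (fun k _ => hblock k)
    rw [le_div_iff₀ hK'] at this
    linarith [this]
  -- final arithmetic
  rw [hsum]
  set P : ℝ := specNorm (A.transpose * A) with hP
  set Dk : ℝ := Finset.univ.sup' ⟨⟨0, hK⟩, Finset.mem_univ _⟩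
      (fun k => specNorm ((rowSub A (S k)).transpose * rowSub A (S k))) with hDk
  set σ : ℝ := kthEigen (A.transpose * A) 1 with hσ
  have hρT : 0 < ρ * T := by nlinarith
  have hL : (K : ℝ) * (P / n) / ((K : ℝ) / n * Dk) = P / Dk := by
    rw [show (K : ℝ) * (P / n) = ((K : ℝ) / n) * P by ring,
      mul_div_mul_left _ _ (ne_of_gt (by positivity : (0:ℝ) < (K : ℝ) / n))]
  rw [ge_iff_le, hL, div_le_div_iff₀ hρT hDpos]
  nlinarith [mul_le_mul_of_nonneg_left hKD hσ0,
    mul_le_mul_of_nonneg_right hσP (le_of_lt hρT)]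
end

section
/- Let A ∈ ℝ^{n×d}, and let S̄ = (S_1,…,S_K) be any partition of {1,…,n} into K pairwise disjoint blocks, each of equal size m = n/K. If σ(AᵀA, n − n/K + 1) > 0, then Υ(A,S̄,K) := K·L_f/L_b ≤ σ(AᵀA, 1)/σ(AᵀA, n − n/K + 1), where L_f := (1/n)‖AᵀA‖, L_b := (K/n)·max_{k∈[K]} ‖(S^k A)ᵀ(S^k A)‖, and σ(H,k) denotes the k-th largest eigenvalue of a real symmetric matrix H, with σ(H,k) := 0 when k exceeds its dimension. -/
open scoped RealInnerProductSpace

lemma sorted_getElem_le {l : List ℝ} (hs : l.Pairwise (· ≤ ·)) {i j : ℕ} (hij : i ≤ j)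
    (hj : j < l.length) : l[i]'(lt_of_le_of_lt hij hj) ≤ l[j] := by
  rcases eq_or_lt_of_le hij with rfl | hlt
  · exact le_refl _
  · exact List.pairwise_iff_getElem.mp hs i j _ hj hlt

lemma kthEigen_eq_zero_of_dim_lt {d k : ℕ} (H : Matrix (Fin d) (Fin d) ℝ) (hdk : d < k) :
    kthEigen H k = 0 := by
  unfold kthEigen
  letI := Classical.dec H.IsHermitian
  split
  · rename_i h
    apply List.getD_eq_default
    simp only [List.length_reverse, Multiset.length_sort, Multiset.card_map]
    simp only [Finset.card_val, Finset.card_univ, Fintype.card_fin]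
    omega
  · rfl

lemma kthEigen_spec {d : ℕ} {H : Matrix (Fin d) (Fin d) ℝ} (h : H.IsHermitian)
    {k : ℕ} (hk1 : 1 ≤ k) (hkd : k ≤ d) :
    k ≤ (Finset.univ.filter (fun j => kthEigen H k ≤ h.eigenvalues j)).card := by
  classical
  set s : Multiset ℝ := Finset.univ.val.map h.eigenvalues with hs
  set l : List ℝ := s.sort (· ≤ ·) with hldef
  have hl : l.length = d := by
    simp [hldef, hs, Multiset.length_sort]
  have hsort : l.Pairwise (· ≤ ·) := Multiset.pairwise_sort _ _
  have hidx : d - k < l.length := by omega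
  have hkth : kthEigen H k = l[d - k] := by
    unfold kthEigen
    rw [dif_pos h]
    have h1 : k - 1 < l.reverse.length := by simp [hl]; omega
    rw [List.getD_eq_getElem _ _ h1, List.getElem_reverse]
    congr 1
    omega
  rw [hkth]
  -- counting
  have hdropall : ∀ y ∈ l.drop (d - k), l[d - k] ≤ y := by
    intro y hy
    obtain ⟨i, hi, rfl⟩ := List.mem_iff_getElem.mp hy
    rw [List.length_drop] at hi
    rw [List.getElem_drop]
    exact sorted_getElem_le hsort (Nat.le_add_right _ _) (by omega)
  set p : ℝ → Bool := fun y => decide (l[d - k] ≤ y) with hp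
  have h1 : (l.drop (d - k)).countP p = k := by
    rw [List.countP_eq_length.mpr (fun a ha => by simpa [hp] using hdropall a ha)]
    rw [List.length_drop, hl]
    omega
  have h2 : k ≤ l.countP p := by
    rw [← h1]; exact (List.drop_sublist _ _).countP_le (p := p)
  have h3 : Multiset.countP (fun y => l[d - k] ≤ y) s = l.countP p := by
    rw [← Multiset.sort_eq s (· ≤ ·), ← hldef, Multiset.coe_countP]
  have h4 : Multiset.countP (fun y => l[d - k] ≤ y) s
      = (Finset.univ.filter (fun j => l[d - k] ≤ h.eigenvalues j)).card := by
    rw [hs, Multiset.countP_map]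
    rfl
  omega

lemma le_kthEigen_one {d : ℕ} {H : Matrix (Fin d) (Fin d) ℝ} (h : H.IsHermitian)
    (hd : 0 < d) (j : Fin d) : h.eigenvalues j ≤ kthEigen H 1 := by
  classical
  set s : Multiset ℝ := Finset.univ.val.map h.eigenvalues with hs
  set l : List ℝ := s.sort (· ≤ ·) with hldef
  have hl : l.length = d := by simp [hldef, hs, Multiset.length_sort]
  have hsort : l.Pairwise (· ≤ ·) := Multiset.pairwise_sort _ _
  have hkth : kthEigen H 1 = l[d - 1]'(by omega) := by
    unfold kthEigen
    rw [dif_pos h]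
    have h1 : 1 - 1 < l.reverse.length := by simp [hl]; omega
    rw [List.getD_eq_getElem _ _ h1, List.getElem_reverse]
    congr 1
    omega
  rw [hkth]
  have hmem : h.eigenvalues j ∈ l := by
    rw [hldef, Multiset.mem_sort, hs]
    exact Multiset.mem_map_of_mem _ (Finset.mem_univ_val _)
  obtain ⟨i, hi, hEq⟩ := List.mem_iff_getElem.mp hmem
  rw [← hEq]
  exact sorted_getElem_le hsort (by omega) (by omega)
open scoped RealInnerProductSpace

lemma toEuclideanLin_eigen {d : ℕ} {H : Matrix (Fin d) (Fin d) ℝ} (h : H.IsHermitian)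
    (j : Fin d) :
    Matrix.toEuclideanLin H (h.eigenvectorBasis j) = h.eigenvalues j • h.eigenvectorBasis j := by
  have := h.mulVec_eigenvectorBasis j
  apply (WithLp.equiv 2 _).injective
  rw [Matrix.toEuclideanLin_apply, this]; rfl

lemma specNorm_apply_le {m n : Type*} [Fintype m] [Fintype n] [DecidableEq n]
    (A : Matrix m n ℝ) (x : EuclideanSpace ℝ n) :
    ‖Matrix.toEuclideanLin A x‖ ≤ specNorm A * ‖x‖ :=
  (LinearMap.toContinuousLinearMap (Matrix.toEuclideanLin A)).le_opNorm x

lemma inner_toEuclideanLin_eq_sum {d : ℕ} {H : Matrix (Fin d) (Fin d) ℝ}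
    (h : H.IsHermitian) (x : EuclideanSpace ℝ (Fin d)) :
    ⟪x, Matrix.toEuclideanLin H x⟫ =
      ∑ j, h.eigenvalues j * (h.eigenvectorBasis.repr x j)^2 := by
  set b := h.eigenvectorBasis with hb
  have hTx : Matrix.toEuclideanLin H x = ∑ j, (b.repr x j * h.eigenvalues j) • b j := by
    conv_lhs => rw [← b.sum_repr x]
    rw [map_sum]
    refine Finset.sum_congr rfl fun j _ => ?_
    rw [map_smul, toEuclideanLin_eigen h j, smul_smul]
  rw [hTx, inner_sum]
  refine Finset.sum_congr rfl fun j _ => ?_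
  rw [real_inner_smul_right, real_inner_comm, ← b.repr_apply_apply]
  ring

lemma norm_sq_eq_sum_repr {d : ℕ} (b : OrthonormalBasis (Fin d) ℝ (EuclideanSpace ℝ (Fin d)))
    (x : EuclideanSpace ℝ (Fin d)) :
    ‖x‖^2 = ∑ j, (b.repr x j)^2 := by
  rw [← b.repr.norm_map x, EuclideanSpace.norm_eq,
    Real.sq_sqrt (by positivity)]
  refine Finset.sum_congr rfl fun j _ => ?_
  rw [Real.norm_eq_abs, sq_abs]

lemma range_toEuclideanLin_rank {d : ℕ} (C : Matrix (Fin d) (Fin d) ℝ) :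
    Module.finrank ℝ (LinearMap.range (Matrix.toEuclideanLin C)) = C.rank := by
  rw [Matrix.rank_eq_finrank_range_toLin C (PiLp.basisFun 2 ℝ (Fin d)) (PiLp.basisFun 2 ℝ (Fin d))]
  rfl

lemma kthEigen_le_specNorm_of_rank_lt {d : ℕ} {H B C : Matrix (Fin d) (Fin d) ℝ}
    (hH : H.IsHermitian) (hHBC : H = B + C) {k : ℕ}
    (hk1 : 1 ≤ k) (hkd : k ≤ d) (hrank : C.rank < k) :
    kthEigen H k ≤ specNorm B := by
  classical
  set σ := kthEigen H k with hσdef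
  set b := hH.eigenvectorBasis with hb
  set T : Finset (Fin d) := Finset.univ.filter (fun j => σ ≤ hH.eigenvalues j) with hT
  have hTcard : k ≤ T.card := kthEigen_spec hH hk1 hkd
  set V : Submodule ℝ (EuclideanSpace ℝ (Fin d)) := Submodule.span ℝ (b '' ↑T) with hV
  have hVrank : Module.finrank ℝ V = T.card := by
    have li : LinearIndependent ℝ (fun i : (T : Set (Fin d)) => b i) :=
      b.orthonormal.linearIndependent.comp _ Subtype.coe_injective
    have := finrank_span_eq_card li
    rw [← Set.image_eq_range] at this
    rw [hV, this]
    simp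
  set W : Submodule ℝ (EuclideanSpace ℝ (Fin d)) := LinearMap.ker (Matrix.toEuclideanLin C)
    with hW
  have hWrank : Module.finrank ℝ W + C.rank = d := by
    have h1 := LinearMap.finrank_range_add_finrank_ker (Matrix.toEuclideanLin C)
    rw [range_toEuclideanLin_rank, finrank_euclideanSpace_fin] at h1
    rw [hW]
    omega
  have hinf : 0 < Module.finrank ℝ (V ⊓ W : Submodule ℝ (EuclideanSpace ℝ (Fin d))) := by
    have h1 := Submodule.finrank_sup_add_finrank_inf_eq V W
    have h2 : Module.finrank ℝ (V ⊔ W : Submodule ℝ (EuclideanSpace ℝ (Fin d))) ≤ d := by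
      simpa [finrank_euclideanSpace_fin] using
        (Submodule.finrank_le (V ⊔ W : Submodule ℝ (EuclideanSpace ℝ (Fin d))))
    omega
  obtain ⟨x, hxVW, hx0⟩ : ∃ x, x ∈ V ⊓ W ∧ x ≠ 0 := by
    apply Submodule.exists_mem_ne_zero_of_ne_bot
    intro hbot
    rw [hbot, finrank_bot] at hinf
    omega
  obtain ⟨hxV, hxW⟩ := Submodule.mem_inf.mp hxVW
  -- repr vanishes outside T
  have hrepr0 : ∀ j ∉ T, b.repr x j = 0 := by
    intro j hj
    have hle : V ≤ (Submodule.span ℝ {b j})ᗮ := by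
      rw [hV, Submodule.span_le]
      rintro y ⟨i, hiT, rfl⟩
      rw [SetLike.mem_coe, Submodule.mem_orthogonal_singleton_iff_inner_right]
      exact b.orthonormal.2 (fun hji => hj (hji ▸ hiT))
    rw [b.repr_apply_apply]
    exact Submodule.mem_orthogonal_singleton_iff_inner_right.mp (hle hxV)
  -- lower bound on the quadratic form
  have hlow : σ * ‖x‖^2 ≤ ⟪x, Matrix.toEuclideanLin H x⟫ := by
    rw [inner_toEuclideanLin_eq_sum hH, norm_sq_eq_sum_repr b, Finset.mul_sum]
    refine Finset.sum_le_sum fun j _ => ?_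
    by_cases hjT : j ∈ T
    · have hσj : σ ≤ hH.eigenvalues j := by
        rw [hT] at hjT
        exact (Finset.mem_filter.mp hjT).2
      exact mul_le_mul_of_nonneg_right hσj (sq_nonneg _)
    · rw [hrepr0 j hjT]
      simp
  -- upper bound
  have hupp : ⟪x, Matrix.toEuclideanLin H x⟫ ≤ specNorm B * ‖x‖^2 := by
    have hCx : Matrix.toEuclideanLin C x = 0 := hxW
    have hHx : Matrix.toEuclideanLin H x = Matrix.toEuclideanLin B x := by
      rw [hHBC, map_add, LinearMap.add_apply, hCx, add_zero]
    rw [hHx]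
    calc ⟪x, Matrix.toEuclideanLin B x⟫ ≤ ‖x‖ * ‖Matrix.toEuclideanLin B x‖ :=
          real_inner_le_norm _ _
      _ ≤ ‖x‖ * (specNorm B * ‖x‖) := by
          exact mul_le_mul_of_nonneg_left (specNorm_apply_le B x) (norm_nonneg x)
      _ = specNorm B * ‖x‖^2 := by ring
  have hx2 : 0 < ‖x‖^2 := pow_pos (norm_pos_iff.mpr hx0) 2
  have := hlow.trans hupp
  exact le_of_mul_le_mul_right (by linarith) hx2

lemma specNorm_le_kthEigen_one {d : ℕ} {H : Matrix (Fin d) (Fin d) ℝ}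
    (hH : H.PosSemidef) (hd : 0 < d) : specNorm H ≤ kthEigen H 1 := by
  have h := hH.isHermitian
  have hlam : ∀ j, h.eigenvalues j ≤ kthEigen H 1 := le_kthEigen_one h hd
  have hlam0 : ∀ j, 0 ≤ h.eigenvalues j := hH.eigenvalues_nonneg
  have hm0 : 0 ≤ kthEigen H 1 := le_trans (hlam0 ⟨0, hd⟩) (hlam ⟨0, hd⟩)
  apply ContinuousLinearMap.opNorm_le_bound _ hm0
  intro x
  simp only [LinearMap.coe_toContinuousLinearMap']
  set b := h.eigenvectorBasis with hb
  have hrepr : ∀ j, b.repr (Matrix.toEuclideanLin H x) j = h.eigenvalues j * b.repr x j := by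
    intro j
    rw [b.repr_apply_apply, b.repr_apply_apply,
      ← Matrix.isHermitian_iff_isSymmetric.mp h (b j) x,
      toEuclideanLin_eigen h j, real_inner_smul_left]
  have hnorm : ‖Matrix.toEuclideanLin H x‖^2 ≤ (kthEigen H 1 * ‖x‖)^2 := by
    rw [norm_sq_eq_sum_repr b, mul_pow, norm_sq_eq_sum_repr b x, Finset.mul_sum]
    refine Finset.sum_le_sum fun j _ => ?_
    rw [hrepr j, mul_pow]
    exact mul_le_mul_of_nonneg_right
      (pow_le_pow_left₀ (hlam0 j) (hlam j) 2) (sq_nonneg _)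
  have hx : 0 ≤ kthEigen H 1 * ‖x‖ := mul_nonneg hm0 (norm_nonneg x)
  exact (pow_le_pow_iff_left₀ (norm_nonneg _) hx (by norm_num)).mp hnorm

lemma matrix_split {n d : ℕ} (A : Matrix (Fin n) (Fin d) ℝ) (s : Finset (Fin n)) :
    A.transpose * A = (rowSub A s).transpose * rowSub A s
      + (rowSub A sᶜ).transpose * rowSub A sᶜ := by
  ext p q
  simp only [Matrix.add_apply, Matrix.mul_apply, Matrix.transpose_apply, rowSub,
    Matrix.submatrix_apply, id]
  rw [Finset.sum_coe_sort s (fun i => A i p * A i q),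
    Finset.sum_coe_sort sᶜ (fun i => A i p * A i q),
    Finset.sum_add_sum_compl s (fun i => A i p * A i q)]

/-- For `A ∈ ℝ^{n×d}` and any partition of `[n]` into `K`
pairwise disjoint blocks of equal size `m = n/K`, if `σ(AᵀA, n − n/K + 1) > 0` then
the stochastic acceleration factor `Υ(A,S̄,K) = K·L_f/L_b` is at most
`σ(AᵀA, 1)/σ(AᵀA, n − n/K + 1)`. -/
theorem SA_le_spectral_upper_bound {n d K m : ℕ} (hn : 0 < n) (hK : 0 < K)
    (A : Matrix (Fin n) (Fin d) ℝ)
    (S : Fin K → Finset (Fin n))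
    (hdisj : ∀ k l : Fin K, k ≠ l → Disjoint (S k) (S l))
    (hcover : (Finset.univ : Finset (Fin K)).biUnion S = Finset.univ)
    (hcard : ∀ k, (S k).card = m) (hnKm : n = K * m)
    (hσ : 0 < kthEigen (A.transpose * A) (n - m + 1)) :
    (K : ℝ) * (specNorm (A.transpose * A) / n) /
        ((K : ℝ) / n *
          Finset.univ.sup' ⟨⟨0, hK⟩, Finset.mem_univ _⟩
            (fun k => specNorm ((rowSub A (S k)).transpose * rowSub A (S k)))) ≤
      kthEigen (A.transpose * A) 1 / kthEigen (A.transpose * A) (n - m + 1) := by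
  classical
  have hPSD : (A.transpose * A).PosSemidef := by
    have := Matrix.posSemidef_conjTranspose_mul_self A
    rwa [Matrix.conjTranspose_eq_transpose_of_trivial] at this
  have hHerm := hPSD.isHermitian
  have hmn : m ≤ n := by
    rw [hnKm]; exact Nat.le_mul_of_pos_left m hK
  have hkd : n - m + 1 ≤ d := by
    by_contra hcon
    rw [kthEigen_eq_zero_of_dim_lt (A.transpose * A) (by omega)] at hσ
    exact lt_irrefl 0 hσ
  have hd : 0 < d := by omega
  set k0 : Fin K := ⟨0, hK⟩ with hk0
  set s := S k0 with hs
  have hsplit := matrix_split A s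
  have hrankC : ((rowSub A sᶜ).transpose * rowSub A sᶜ).rank ≤ n - m := by
    rw [Matrix.rank_transpose_mul_self]
    calc (rowSub A sᶜ).rank ≤ Fintype.card {i // i ∈ sᶜ} :=
          Matrix.rank_le_card_height _
      _ = sᶜ.card := Fintype.card_coe _
      _ = n - m := by rw [Finset.card_compl, hs, hcard k0, Fintype.card_fin]
  have hkey : kthEigen (A.transpose * A) (n - m + 1)
      ≤ specNorm ((rowSub A s).transpose * rowSub A s) :=
    kthEigen_le_specNorm_of_rank_lt hHerm hsplit (by omega) hkd (by omega)
  set M := Finset.univ.sup' ⟨⟨0, hK⟩, Finset.mem_univ _⟩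
    (fun k => specNorm ((rowSub A (S k)).transpose * rowSub A (S k))) with hM
  have hBM : specNorm ((rowSub A s).transpose * rowSub A s) ≤ M := by
    rw [hM]
    exact Finset.le_sup' (fun k => specNorm ((rowSub A (S k)).transpose * rowSub A (S k)))
      (Finset.mem_univ k0)
  have hM0 : 0 < M := lt_of_lt_of_le hσ (hkey.trans hBM)
  have hspec : specNorm (A.transpose * A) ≤ kthEigen (A.transpose * A) 1 :=
    specNorm_le_kthEigen_one hPSD hd
  have h10 : 0 ≤ kthEigen (A.transpose * A) 1 := le_trans (norm_nonneg _) hspec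
  have hEq : (K : ℝ) * (specNorm (A.transpose * A) / n) / ((K : ℝ) / n * M)
      = specNorm (A.transpose * A) / M := by
    have hn' : (n : ℝ) ≠ 0 := Nat.cast_ne_zero.mpr hn.ne'
    have hK' : (K : ℝ) ≠ 0 := Nat.cast_ne_zero.mpr hK.ne'
    field_simp
  rw [hEq]
  exact div_le_div₀ h10 hspec hσ (hkey.trans hBM)
end

section
/- Let A ∈ ℝ^{n×d} and let S ⊆ {1,…,n} be a subset of size m ≤ n. Then the row-submatrix A_S of A with rows indexed by S satisfies ‖(A_S)ᵀ A_S‖ ≥ σ(AᵀA, n − m + 1), where ‖·‖ is the spectral norm and σ(H,k) denotes the k-th largest eigenvalue of a real symmetric matrix H (with σ(H,k) := 0 when k exceeds its dimension). -/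
/-- Quadratic form of a Gram matrix `Cᵀ C` as a sum of squares. -/
lemma gram_quad_eq {d : ℕ} {m : Type*} [Fintype m] (C : Matrix m (Fin d) ℝ)
    (v : EuclideanSpace ℝ (Fin d)) :
    (inner ℝ v ((Matrix.toEuclideanLin (C.transpose * C)) v) : ℝ) =
      ∑ j, (C.mulVec (WithLp.equiv 2 (Fin d → ℝ) v) j) ^ 2 := by
  have key : dotProduct (WithLp.equiv 2 (Fin d → ℝ) v)
      ((C.transpose * C).mulVec (WithLp.equiv 2 (Fin d → ℝ) v))
      = ∑ j, (C.mulVec (WithLp.equiv 2 (Fin d → ℝ) v) j) ^ 2 := by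
    rw [← Matrix.mulVec_mulVec, Matrix.dotProduct_mulVec, Matrix.vecMul_transpose]
    simp [dotProduct, sq]
  rw [Matrix.toEuclideanLin_apply, PiLp.inner_apply, ← key]
  simp only [RCLike.inner_apply, starRingEnd_apply, star_trivial]
  rw [dotProduct_comm]; rfl

/-- Inner product bounded by the operator norm times the norm squared. -/
lemma inner_le_specNorm {d : ℕ} (M : Matrix (Fin d) (Fin d) ℝ)
    (v : EuclideanSpace ℝ (Fin d)) :
    (inner ℝ v ((Matrix.toEuclideanLin M) v) : ℝ) ≤ specNorm M * ‖v‖ ^ 2 := by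
  have h1 : (inner ℝ v ((Matrix.toEuclideanLin M) v) : ℝ) ≤
      ‖v‖ * ‖(Matrix.toEuclideanLin M) v‖ := real_inner_le_norm _ _
  have h2 : ‖(Matrix.toEuclideanLin M) v‖ ≤ specNorm M * ‖v‖ :=
    (LinearMap.toContinuousLinearMap (Matrix.toEuclideanLin M)).le_opNorm v
  nlinarith [norm_nonneg v, norm_nonneg ((Matrix.toEuclideanLin M) v)]

/-- For `A ∈ ℝ^{n×d}` and a subset `S ⊆ [n]` of size `m`, the
row-submatrix `A_S` satisfies `‖(A_S)ᵀ A_S‖ ≥ σ(AᵀA, n − m + 1)`. -/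
theorem submatrix_gram_norm_ge_interlacing {n d : ℕ}
    (A : Matrix (Fin n) (Fin d) ℝ) (S : Finset (Fin n)) :
    specNorm ((rowSub A S).transpose * rowSub A S) ≥
      kthEigen (A.transpose * A) (n - S.card + 1) := by
  classical
  have specnn : (0:ℝ) ≤ specNorm ((rowSub A S).transpose * rowSub A S) := norm_nonneg _
  set k := n - S.card + 1 with hkdef
  have hH : (A.transpose * A).IsHermitian := by
    simpa using Matrix.isHermitian_conjTranspose_mul_self A
  set ls := ((Finset.univ.val.map hH.eigenvalues).sort (· ≤ ·)) with hls
  have hkth : kthEigen (A.transpose * A) k = ls.reverse.getD (k - 1) 0 := by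
    rw [kthEigen, dif_pos hH]
  set μ := ls.reverse.getD (k - 1) 0 with hμdef
  rw [hkth]
  by_cases hμpos : 0 < μ
  swap
  · push_neg at hμpos; linarith
  -- lengths
  have hlen : ls.length = d := by
    rw [hls, Multiset.length_sort]
    simp
  have hkd : k - 1 < d := by
    by_contra hc
    push_neg at hc
    have : μ = 0 := by
      rw [hμdef, List.getD_eq_default]
      rw [List.length_reverse, hlen]; exact hc
    linarith
  have hμeq : μ = ls[d - k]'(by omega) := by
    rw [hμdef, List.getD_eq_getElem ls.reverse 0 (by rw [List.length_reverse, hlen]; exact hkd),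
      List.getElem_reverse]
    congr 1
    rw [hlen]
    omega
  -- counting eigenvalues ≥ μ
  set T : Finset (Fin d) := Finset.univ.filter (fun i => μ ≤ hH.eigenvalues i) with hT
  have hTcard : k ≤ T.card := by
    have hsorted : ls.Pairwise (· ≤ ·) := Multiset.pairwise_sort _ _
    have hall : ∀ x ∈ ls.drop (d - k), μ ≤ x := by
      intro x hx
      rw [List.mem_iff_getElem] at hx
      obtain ⟨j, hj, rfl⟩ := hx
      rw [List.getElem_drop]
      rw [hμeq]
      have hjl : d - k + j < ls.length := by
        rw [List.length_drop, hlen] at hj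
        rw [hlen]; omega
      have := hsorted.rel_get_of_le (a := ⟨d - k, by rw [hlen]; omega⟩)
        (b := ⟨d - k + j, hjl⟩) (by simp)
      simpa using this
    have hdroplen : (ls.drop (d - k)).length = k := by
      rw [List.length_drop, hlen]; omega
    have hcount : k ≤ ls.countP (fun x => decide (μ ≤ x)) := by
      conv_rhs => rw [← List.take_append_drop (d - k) ls]
      rw [List.countP_append]
      have : (ls.drop (d - k)).countP (fun x => decide (μ ≤ x)) = k := by
        rw [List.countP_eq_length.mpr (fun a ha => decide_eq_true (hall a ha)), hdroplen]
      omega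
    have hcp : Multiset.countP (fun x => μ ≤ x) (Finset.univ.val.map hH.eigenvalues)
        = ls.countP (fun x => decide (μ ≤ x)) := by
      conv_lhs => rw [← Multiset.sort_eq (Finset.univ.val.map hH.eigenvalues) (· ≤ ·)]
      rw [Multiset.coe_countP]
    have hcp2 : Multiset.countP (fun x => μ ≤ x) (Finset.univ.val.map hH.eigenvalues)
        = T.card := by
      rw [Multiset.countP_map]
      rfl
    omega
  -- the span of top eigenvectors
  set b := hH.eigenvectorBasis with hb
  set V : Submodule ℝ (EuclideanSpace ℝ (Fin d)) :=
    Submodule.span ℝ (Set.range (⇑b ∘ (Subtype.val : {i // i ∈ T} → Fin d))) with hV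
  have hVrank : Module.finrank ℝ V = T.card := by
    rw [hV, finrank_span_eq_card
      (b.orthonormal.linearIndependent.comp Subtype.val Subtype.val_injective)]
    simp
  -- the restriction map to rows outside S
  set φ : EuclideanSpace ℝ (Fin d) →ₗ[ℝ] (Fin n → ℝ) := A.mulVecLin ∘ₗ (WithLp.linearEquiv 2 ℝ (Fin d → ℝ)).toLinearMap with hφ
  set g : V →ₗ[ℝ] ({j : Fin n // j ∈ Sᶜ} → ℝ) :=
    (LinearMap.funLeft ℝ ℝ Subtype.val).comp (φ.comp V.subtype) with hg
  have hginj : ¬ Function.Injective g := by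
    intro hinj
    have hle := LinearMap.finrank_le_finrank_of_injective hinj
    have h1 : Module.finrank ℝ ({j : Fin n // j ∈ Sᶜ} → ℝ) = n - S.card := by
      rw [Module.finrank_pi]
      simp [Finset.card_compl]
    rw [h1, hVrank] at hle
    omega
  have hker : LinearMap.ker g ≠ ⊥ := fun h => hginj (LinearMap.ker_eq_bot.mp h)
  obtain ⟨x, hxker, hxne⟩ := Submodule.exists_mem_ne_zero_of_ne_bot hker
  rw [LinearMap.mem_ker] at hxker
  set v : EuclideanSpace ℝ (Fin d) := (x : EuclideanSpace ℝ (Fin d)) with hvdef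
  have hvV : v ∈ V := x.2
  have hvne : v ≠ 0 := fun h => hxne (by exact_mod_cast Subtype.ext h)
  have hAv : ∀ j : Fin n, j ∉ S → A.mulVec (WithLp.equiv 2 (Fin d → ℝ) v) j = 0 := by
    intro j hj
    have := congrFun (congrArg (fun f => (f : _ → ℝ)) hxker) ⟨j, by simpa using hj⟩
    simpa [hg, hφ, LinearMap.funLeft_apply, Matrix.mulVecLin_apply] using this
  -- coordinates vanish outside T
  have hc0 : ∀ i, i ∉ T → (inner ℝ (b i) v : ℝ) = 0 := by
    intro i hi
    refine Submodule.span_induction ?_ ?_ ?_ ?_ hvV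
    · rintro y ⟨j, rfl⟩
      refine b.orthonormal.2 (fun h => hi ?_)
      rw [h]; exact j.2
    · exact inner_zero_right _
    · intro y z _ _ hy hz
      rw [inner_add_right, hy, hz, add_zero]
    · intro a y _ hy
      rw [real_inner_smul_right, hy, mul_zero]
  -- the quadratic form lower bound
  have hbasis : ∀ i, Matrix.toEuclideanLin (A.transpose * A) (b i)
      = hH.eigenvalues i • b i := by
    intro i
    rw [Matrix.toEuclideanLin_apply, hH.mulVec_eigenvectorBasis, WithLp.toLp_smul]
  have hsym : (Matrix.toEuclideanLin (A.transpose * A)).IsSymmetric :=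
    Matrix.isHermitian_iff_isSymmetric.mp hH
  have hinner : ∀ x y : EuclideanSpace ℝ (Fin d),
      (inner ℝ x y : ℝ) = ∑ i, b.repr x i * b.repr y i := by
    intro x y
    rw [← b.repr.inner_map_map x y, PiLp.inner_apply]
    simp [RCLike.inner_apply, mul_comm]
  have hreprT : ∀ i, b.repr (Matrix.toEuclideanLin (A.transpose * A) v) i
      = hH.eigenvalues i * b.repr v i := by
    intro i
    rw [b.repr_apply_apply, ← hsym (b i) v, hbasis, real_inner_smul_left,
      b.repr_apply_apply]
  have hquadH : (inner ℝ v (Matrix.toEuclideanLin (A.transpose * A) v) : ℝ)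
      = ∑ i, hH.eigenvalues i * (b.repr v i) ^ 2 := by
    rw [hinner]
    refine Finset.sum_congr rfl (fun i _ => ?_)
    rw [hreprT]; ring
  have hnormv : ‖v‖ ^ 2 = ∑ i, (b.repr v i) ^ 2 := by
    rw [← real_inner_self_eq_norm_sq, hinner]
    refine Finset.sum_congr rfl (fun i _ => ?_); ring
  have hlower : μ * ‖v‖ ^ 2 ≤ (inner ℝ v (Matrix.toEuclideanLin (A.transpose * A) v) : ℝ) := by
    rw [hquadH, hnormv, Finset.mul_sum]
    refine Finset.sum_le_sum (fun i _ => ?_)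
    by_cases hiT : i ∈ T
    · have : μ ≤ hH.eigenvalues i := by
        rw [hT] at hiT; simpa using hiT
      nlinarith [sq_nonneg (b.repr v i)]
    · have : b.repr v i = 0 := by
        rw [b.repr_apply_apply]; exact hc0 i hiT
      simp [this]
  -- the two quadratic forms agree
  have hsubeq : ∀ s : {i // i ∈ S},
      (rowSub A S).mulVec (WithLp.equiv 2 (Fin d → ℝ) v) s
      = A.mulVec (WithLp.equiv 2 (Fin d → ℝ) v) s.val := fun s => rfl
  have hquadeq : (inner ℝ v (Matrix.toEuclideanLin (A.transpose * A) v) : ℝ)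
      = inner ℝ v (Matrix.toEuclideanLin ((rowSub A S).transpose * rowSub A S) v) := by
    rw [gram_quad_eq A v, gram_quad_eq (rowSub A S) v]
    have h1 : ∑ s : {i // i ∈ S}, (rowSub A S).mulVec (WithLp.equiv 2 (Fin d → ℝ) v) s ^ 2
        = ∑ i ∈ S, A.mulVec (WithLp.equiv 2 (Fin d → ℝ) v) i ^ 2 := by
      rw [← Finset.sum_coe_sort S (fun i => A.mulVec (WithLp.equiv 2 (Fin d → ℝ) v) i ^ 2)]
      exact Finset.sum_congr rfl (fun s _ => by rw [hsubeq])
    rw [h1]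
    exact (Finset.sum_subset (Finset.subset_univ S)
      (fun i _ hi => by simp [show A.mulVec v.ofLp i = 0 from hAv i hi])).symm
  -- conclude
  have hupper := inner_le_specNorm ((rowSub A S).transpose * rowSub A S) v
  have hvpos : 0 < ‖v‖ ^ 2 := by
    have : 0 < ‖v‖ := norm_pos_iff.mpr hvne
    positivity
  have : μ * ‖v‖ ^ 2 ≤ specNorm ((rowSub A S).transpose * rowSub A S) * ‖v‖ ^ 2 := by
    calc μ * ‖v‖ ^ 2 ≤ _ := hlower
    _ = _ := hquadeq
    _ ≤ _ := hupper
  exact le_of_mul_le_mul_right (by linarith [this]) hvpos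
end

section
/- Let A ∈ ℝ^{n×d}, x† ∈ ℝ^d, b := A x†, and let 𝒦 ⊆ ℝ^d be a nonempty closed convex set with x† ∈ 𝒦; let P_𝒦 denote the metric projection onto 𝒦. Let (S_1,…,S_K) be a partition of {1,…,n} into K pairwise disjoint blocks of equal size m = n/K. Suppose L_e > 0 satisfies: for all x ∈ 𝒦, (1/K)·Σ_{k=1}^K ‖(1/m)·Aᵀ(S^k)ᵀS^k A (x − x†)‖₂² ≤ (L_e/n)·‖A(x − x†)‖₂². Suppose μ_c ∈ [0, L_e] satisfies the restricted strong convexity condition (1/n)‖Az‖₂² ≥ μ_c‖z‖₂² for every z of the form z = c(x − x†) with c ≥ 0 and x ∈ 𝒦. Then for every x ∈ 𝒦, defining x⁺_k := P_𝒦(x − (1/L_e)·(1/m)·Aᵀ(S^k)ᵀS^k(Ax − b)) for each k ∈ [K], it holds that (1/K)·Σ_{k=1}^K ‖x⁺_k − x†‖₂² ≤ (1 − μ_c/L_e)·‖x − x†‖₂². -/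
lemma proj_sq_le {d : ℕ} {𝒦 : Set (Fin d → ℝ)} (hconv : Convex ℝ 𝒦)
    (P : (Fin d → ℝ) → (Fin d → ℝ))
    (hP : ∀ v, P v ∈ 𝒦 ∧ ∀ w ∈ 𝒦, ∑ l, (v l - P v l) ^ 2 ≤ ∑ l, (v l - w l) ^ 2)
    (v : Fin d → ℝ) {w : Fin d → ℝ} (hw : w ∈ 𝒦) :
    ∑ l, (P v l - w l) ^ 2 ≤ ∑ l, (v l - w l) ^ 2 := by
  set p := P v with hp
  have hc : ∑ l, (v l - p l) * (w l - p l) ≤ 0 := by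
    by_contra hcon
    push_neg at hcon
    set c := ∑ l, (v l - p l) * (w l - p l) with hcdef
    set B := ∑ l, (w l - p l) ^ 2 with hBdef
    have hB0 : 0 ≤ B := Finset.sum_nonneg fun l _ => sq_nonneg _
    have key : ∀ t : ℝ, 0 ≤ t → t ≤ 1 → 2 * t * c ≤ t ^ 2 * B := by
      intro t ht0 ht1
      have hmem : (fun l => p l + t * (w l - p l)) ∈ 𝒦 := by
        have h := hconv (hP v).1 hw (by linarith : (0:ℝ) ≤ 1 - t) ht0 (by ring)
        convert h using 1
        funext l
        simp only [Pi.add_apply, Pi.smul_apply, smul_eq_mul]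
        ring
      have h2 := (hP v).2 _ hmem
      have expand : ∑ l, (v l - (p l + t * (w l - p l))) ^ 2
          = ∑ l, (v l - p l) ^ 2 - 2 * t * c + t ^ 2 * B := by
        rw [hcdef, hBdef, Finset.mul_sum, Finset.mul_sum, ← Finset.sum_sub_distrib,
          ← Finset.sum_add_distrib]
        exact Finset.sum_congr rfl fun l _ => by ring
      rw [expand] at h2
      linarith
    rcases eq_or_lt_of_le hB0 with hB0' | hBpos
    · have hall := (Finset.sum_eq_zero_iff_of_nonneg
        (fun l (_ : l ∈ Finset.univ) => sq_nonneg (w l - p l))).mp hB0'.symm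
      have hc0 : c = 0 := Finset.sum_eq_zero fun l _ => by
        have h1 := hall l (Finset.mem_univ l)
        have h2 : w l - p l = 0 := by nlinarith
        rw [h2, mul_zero]
      linarith
    · set t := min 1 (c / B) with htdef
      have ht0 : 0 < t := lt_min one_pos (div_pos hcon hBpos)
      have ht1 : t ≤ 1 := min_le_left _ _
      have htc : t ≤ c / B := min_le_right _ _
      have h3 := key t ht0.le ht1
      have h4 : t * B ≤ c := by
        rw [← le_div_iff₀ hBpos]; exact htc
      nlinarith
  have expand : ∑ l, (v l - w l) ^ 2
      = ∑ l, (v l - p l) ^ 2 - 2 * (∑ l, (v l - p l) * (w l - p l)) + ∑ l, (p l - w l) ^ 2 := by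
    rw [Finset.mul_sum, ← Finset.sum_sub_distrib, ← Finset.sum_add_distrib]
    exact Finset.sum_congr rfl fun l _ => by ring
  have hnn : 0 ≤ ∑ l, (v l - p l) ^ 2 := Finset.sum_nonneg fun l _ => sq_nonneg _
  linarith

/-- One-step expected contraction of minibatch projected SGD
with step size `1/L_e` for noiseless constrained least-squares, under expected
smoothness (at the ground truth) and restricted strong convexity. -/
theorem minibatch_sgd_one_step_contraction {n d K m : ℕ} (hn : 0 < n) (hK : 0 < K)
    (hm : 0 < m) (hnKm : n = K * m)
    (A : Matrix (Fin n) (Fin d) ℝ) (xdag : Fin d → ℝ) (b : Fin n → ℝ)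
    (hb : b = A.mulVec xdag)
    (𝒦 : Set (Fin d → ℝ)) (h𝒦conv : Convex ℝ 𝒦) (h𝒦closed : IsClosed 𝒦)
    (h𝒦ne : 𝒦.Nonempty) (hxdag : xdag ∈ 𝒦)
    (P : (Fin d → ℝ) → (Fin d → ℝ))
    (hP : ∀ v, P v ∈ 𝒦 ∧ ∀ w ∈ 𝒦, ∑ l, (v l - P v l) ^ 2 ≤ ∑ l, (v l - w l) ^ 2)
    (S : Fin K → Finset (Fin n))
    (hdisj : ∀ k l : Fin K, k ≠ l → Disjoint (S k) (S l))
    (hcover : (Finset.univ : Finset (Fin K)).biUnion S = Finset.univ)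
    (hcard : ∀ k, (S k).card = m)
    (Le : ℝ) (hLe : 0 < Le)
    (hES : ∀ x ∈ 𝒦,
      (1 / (K : ℝ)) * ∑ k : Fin K, ∑ l : Fin d,
          ((1 / (m : ℝ)) * ∑ i ∈ S k, A i l * A.mulVec (x - xdag) i) ^ 2 ≤
        (Le / n) * ∑ i, (A.mulVec (x - xdag) i) ^ 2)
    (μc : ℝ) (hμ0 : 0 ≤ μc) (hμLe : μc ≤ Le)
    (hRSC : ∀ x ∈ 𝒦, ∀ c : ℝ, 0 ≤ c →
      μc * ∑ l, (c • (x - xdag)) l ^ 2 ≤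
        (1 / (n : ℝ)) * ∑ i, (A.mulVec (c • (x - xdag)) i) ^ 2) :
    ∀ x ∈ 𝒦,
      (1 / (K : ℝ)) * ∑ k : Fin K,
          ∑ l, ((P (fun l' => x l' -
              (1 / Le) * ((1 / (m : ℝ)) * ∑ i ∈ S k, A i l' * (A.mulVec x i - b i)))) l -
            xdag l) ^ 2 ≤
        (1 - μc / Le) * ∑ l, (x l - xdag l) ^ 2 := by
  intro x hx
  -- notation
  set g : Fin K → Fin d → ℝ :=
    fun k l => (1 / (m : ℝ)) * ∑ i ∈ S k, A i l * (A.mulVec x i - b i) with hg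
  have hxe : ∀ i, A.mulVec (x - xdag) i = A.mulVec x i - b i := by
    intro i
    simp [hb, Matrix.mulVec, dotProduct, mul_sub, Finset.sum_sub_distrib]
  -- projection bound
  have hKpos : (0 : ℝ) < (K : ℝ) := by exact_mod_cast hK
  have hmpos : (0 : ℝ) < (m : ℝ) := by exact_mod_cast hm
  have hnpos : (0 : ℝ) < (n : ℝ) := by exact_mod_cast hn
  have step1 : (1 / (K : ℝ)) * ∑ k : Fin K,
          ∑ l, ((P (fun l' => x l' - (1 / Le) * g k l')) l - xdag l) ^ 2 ≤
      (1 / (K : ℝ)) * ∑ k : Fin K, ∑ l, ((x l - (1 / Le) * g k l) - xdag l) ^ 2 := by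
    apply mul_le_mul_of_nonneg_left _ (by positivity)
    apply Finset.sum_le_sum
    intro k _
    exact proj_sq_le h𝒦conv P hP (fun l' => x l' - (1 / Le) * g k l') hxdag
  -- dot product identity
  have hdot : ∀ k, ∑ l, g k l * (x l - xdag l)
      = (1 / (m : ℝ)) * ∑ i ∈ S k, (A.mulVec (x - xdag) i) ^ 2 := by
    intro k
    have h1 : ∑ l, g k l * (x l - xdag l)
        = (1 / (m : ℝ)) * ∑ i ∈ S k, (A.mulVec x i - b i) * ∑ l, A i l * (x l - xdag l) := by
      rw [hg]
      simp only [Finset.sum_mul, Finset.mul_sum]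
      rw [Finset.sum_comm]
      exact Finset.sum_congr rfl fun i _ => Finset.sum_congr rfl fun l _ => by ring
    rw [h1, Finset.mul_sum, Finset.mul_sum]
    apply Finset.sum_congr rfl
    intro i _
    have h2 : ∑ l, A i l * (x l - xdag l) = A.mulVec (x - xdag) i := by
      simp [Matrix.mulVec, dotProduct, mul_sub, Finset.sum_sub_distrib]
    rw [h2, hxe i]
    ring
  -- partition identity
  have hpart : ∑ k : Fin K, ∑ i ∈ S k, (A.mulVec (x - xdag) i) ^ 2
      = ∑ i, (A.mulVec (x - xdag) i) ^ 2 := by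
    rw [← hcover, Finset.sum_biUnion]
    intro k _ l _ hkl
    exact hdisj k l hkl
  -- per-k expansion
  have hk : ∀ k, ∑ l, ((x l - (1 / Le) * g k l) - xdag l) ^ 2
      = ∑ l, (x l - xdag l) ^ 2 - (2 / Le) * (∑ l, g k l * (x l - xdag l))
        + (1 / Le) ^ 2 * ∑ l, (g k l) ^ 2 := by
    intro k
    rw [Finset.mul_sum, Finset.mul_sum, ← Finset.sum_sub_distrib, ← Finset.sum_add_distrib]
    exact Finset.sum_congr rfl fun l _ => by ring
  -- quantities
  set E := ∑ l, (x l - xdag l) ^ 2 with hE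
  set Q := ∑ i, (A.mulVec (x - xdag) i) ^ 2 with hQ
  have hGbound := hES x hx
  have hgalt : ∀ k l, g k l = (1 / (m : ℝ)) * ∑ i ∈ S k, A i l * A.mulVec (x - xdag) i := by
    intro k l
    simp only [hg]
    congr 1
    exact Finset.sum_congr rfl fun i _ => by rw [hxe i]
  have hG : (1 / (K : ℝ)) * ∑ k : Fin K, ∑ l : Fin d, (g k l) ^ 2 ≤ (Le / n) * Q := by
    calc (1 / (K : ℝ)) * ∑ k : Fin K, ∑ l : Fin d, (g k l) ^ 2
        = (1 / (K : ℝ)) * ∑ k : Fin K, ∑ l : Fin d,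
            ((1 / (m : ℝ)) * ∑ i ∈ S k, A i l * A.mulVec (x - xdag) i) ^ 2 := by
          congr 1
          apply Finset.sum_congr rfl; intro k _
          apply Finset.sum_congr rfl; intro l _
          rw [hgalt]
      _ ≤ (Le / n) * Q := hGbound
  have hRSC1 : μc * E ≤ (1 / (n : ℝ)) * Q := by
    have h := hRSC x hx 1 zero_le_one
    simpa [one_smul, Pi.sub_apply, hE, hQ] using h
  -- assemble
  have hsum : (1 / (K : ℝ)) * ∑ k : Fin K, ∑ l, ((x l - (1 / Le) * g k l) - xdag l) ^ 2
      = E - (2 / Le) * ((1 / ((K : ℝ) * m)) * Q)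
        + (1 / Le) ^ 2 * ((1 / (K : ℝ)) * ∑ k : Fin K, ∑ l : Fin d, (g k l) ^ 2) := by
    have h1 : ∑ k : Fin K, ∑ l, ((x l - (1 / Le) * g k l) - xdag l) ^ 2
        = (K : ℝ) * E - (2 / Le) * ((1 / (m : ℝ)) * Q)
          + (1 / Le) ^ 2 * ∑ k : Fin K, ∑ l : Fin d, (g k l) ^ 2 := by
      rw [Finset.sum_congr rfl fun k _ => hk k]
      rw [Finset.sum_add_distrib, Finset.sum_sub_distrib, ← Finset.mul_sum, ← Finset.mul_sum]
      have h2 : ∑ k : Fin K, (∑ l, g k l * (x l - xdag l))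
          = (1 / (m : ℝ)) * Q := by
        rw [Finset.sum_congr rfl fun k _ => hdot k, ← Finset.mul_sum, hpart]
      rw [h2, Finset.sum_const]
      simp only [Finset.card_univ, Fintype.card_fin, nsmul_eq_mul]
    rw [h1]
    field_simp
  have hQn : ((K : ℝ) * m) = (n : ℝ) := by
    rw [hnKm]; push_cast; ring
  have hQnn : 0 ≤ Q := Finset.sum_nonneg fun i _ => sq_nonneg _
  calc (1 / (K : ℝ)) * ∑ k : Fin K,
          ∑ l, ((P (fun l' => x l' -
              (1 / Le) * ((1 / (m : ℝ)) * ∑ i ∈ S k, A i l' * (A.mulVec x i - b i)))) l -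
            xdag l) ^ 2
      = (1 / (K : ℝ)) * ∑ k : Fin K,
          ∑ l, ((P (fun l' => x l' - (1 / Le) * g k l')) l - xdag l) ^ 2 := rfl
    _ ≤ (1 / (K : ℝ)) * ∑ k : Fin K, ∑ l, ((x l - (1 / Le) * g k l) - xdag l) ^ 2 := step1
    _ = E - (2 / Le) * ((1 / ((K : ℝ) * m)) * Q)
        + (1 / Le) ^ 2 * ((1 / (K : ℝ)) * ∑ k : Fin K, ∑ l : Fin d, (g k l) ^ 2) := hsum
    _ ≤ E - (2 / Le) * ((1 / (n : ℝ)) * Q) + (1 / Le) ^ 2 * ((Le / n) * Q) := by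
        rw [hQn]
        have := mul_le_mul_of_nonneg_left hG (by positivity : (0:ℝ) ≤ (1 / Le) ^ 2)
        linarith
    _ = E - (1 / Le) * ((1 / (n : ℝ)) * Q) := by field_simp; ring
    _ ≤ E - (1 / Le) * (μc * E) := by
        have h := mul_le_mul_of_nonneg_left hRSC1 (by positivity : (0:ℝ) ≤ 1 / Le)
        linarith
    _ = (1 - μc / Le) * E := by field_simp
end

section
/- Let A ∈ ℝ^{n×d}, x† ∈ ℝ^d, b := A x†, and let 𝒦 ⊆ ℝ^d be a nonempty closed convex set with x† ∈ 𝒦; let P_𝒦 denote the metric projection onto 𝒦. Let (S_1,…,S_K) be a partition of {1,…,n} into K pairwise disjoint blocks of equal size m = n/K. Suppose L_e > 0 satisfies: for all x ∈ 𝒦, (1/K)·Σ_{k=1}^K ‖(1/m)·Aᵀ(S^k)ᵀS^k A (x − x†)‖₂² ≤ (L_e/n)·‖A(x − x†)‖₂², and suppose μ_c ∈ [0, L_e] satisfies (1/n)‖Az‖₂² ≥ μ_c‖z‖₂² for every z = c(x − x†) with c ≥ 0 and x ∈ 𝒦. Fix x⁰ ∈ 𝒦 and i ≥ 0. For each index sequence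 κ = (k_1,…,k_i) ∈ [K]^i define x⁰_κ := x⁰ and x^j_κ := P_𝒦(x^{j−1}_κ − (1/L_e)·(1/m)·Aᵀ(S^{k_j})ᵀS^{k_j}(A x^{j−1}_κ − b)) for j = 1,…,i. Then the average over all K^i sequences satisfies K^{−i}·Σ_{κ∈[K]^i} ‖x^i_κ − x†‖₂ ≤ (1 − μ_c/L_e)^{i/2}·‖x⁰ − x†‖₂. -/
open Finset

lemma proj_contract {d : ℕ} {𝒦 : Set (Fin d → ℝ)} (hconv : Convex ℝ 𝒦)
    {P : (Fin d → ℝ) → (Fin d → ℝ)}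
    (hP : ∀ v, P v ∈ 𝒦 ∧ ∀ w ∈ 𝒦, ∑ l, (v l - P v l) ^ 2 ≤ ∑ l, (v l - w l) ^ 2)
    (v w : Fin d → ℝ) (hw : w ∈ 𝒦) :
    ∑ l, (P v l - w l) ^ 2 ≤ ∑ l, (v l - w l) ^ 2 := by
  set p := P v with hpdef
  set s := ∑ l, (v l - p l) * (w l - p l) with hs
  set Q := ∑ l, (w l - p l) ^ 2 with hQ
  have hQ0 : 0 ≤ Q := Finset.sum_nonneg fun _ _ => sq_nonneg _
  have key : ∀ t : ℝ, 0 < t → t ≤ 1 → 2 * t * s ≤ t ^ 2 * Q := by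
    intro t ht0 ht1
    have hwt : (fun l => p l + t * (w l - p l)) ∈ 𝒦 := by
      have h := hconv (hP v).1 hw (by linarith : (0:ℝ) ≤ 1 - t) ht0.le (by ring)
      convert h using 1
      funext l
      simp only [Pi.add_apply, Pi.smul_apply, smul_eq_mul]
      ring
    have h2 := (hP v).2 _ hwt
    have expand : ∑ l, (v l - (p l + t * (w l - p l))) ^ 2
        = (∑ l, (v l - p l) ^ 2) - 2 * t * s + t ^ 2 * Q := by
      rw [hs, hQ, Finset.mul_sum, Finset.mul_sum, ← Finset.sum_sub_distrib,
        ← Finset.sum_add_distrib]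
      exact Finset.sum_congr rfl fun l _ => by ring
    rw [expand] at h2
    linarith
  have hs0 : s ≤ 0 := by
    by_contra hs'
    push_neg at hs'
    have hQpos : 0 < Q := by
      rcases hQ0.lt_or_eq with h | h
      · exact h
      · exfalso; have := key 1 one_pos le_rfl; nlinarith
    set t := min 1 (s / Q) with ht
    have ht0 : 0 < t := lt_min one_pos (div_pos hs' hQpos)
    have ht1 : t ≤ 1 := min_le_left _ _
    have hk := key t ht0 ht1
    have htQ : t * Q ≤ s := by
      have h1 : t ≤ s / Q := min_le_right _ _
      calc t * Q ≤ (s / Q) * Q := by nlinarith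
        _ = s := div_mul_cancel₀ _ hQpos.ne'
    nlinarith
  have hvp : 0 ≤ ∑ l, (v l - p l) ^ 2 := Finset.sum_nonneg fun _ _ => sq_nonneg _
  have expand2 : ∑ l, (v l - w l) ^ 2
      = (∑ l, (v l - p l) ^ 2) + (∑ l, (p l - w l) ^ 2) - 2 * s := by
    rw [hs, Finset.mul_sum, ← Finset.sum_add_distrib, ← Finset.sum_sub_distrib]
    exact Finset.sum_congr rfl fun l _ => by ring
  have hpw : ∑ l, (p l - w l) ^ 2 = Q := Finset.sum_congr rfl fun l _ => by ring
  linarith [expand2]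

/-- Convergence of minibatch projected SGD (step size `1/L_e`) for
noiseless constrained least-squares under expected smoothness (at the ground truth)
and restricted strong convexity: after `i` iterations, the average over all `K^i`
minibatch index sequences of the estimation error `‖x^i_κ − x†‖₂` is at most
`(1 − μ_c/L_e)^{i/2}·‖x⁰ − x†‖₂`. -/
theorem minibatch_sgd_convergence {n d K m : ℕ} (hn : 0 < n) (hK : 0 < K)
    (hm : 0 < m) (hnKm : n = K * m)
    (A : Matrix (Fin n) (Fin d) ℝ) (xdag : Fin d → ℝ) (b : Fin n → ℝ)
    (hb : b = A.mulVec xdag)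
    (𝒦 : Set (Fin d → ℝ)) (h𝒦conv : Convex ℝ 𝒦) (h𝒦closed : IsClosed 𝒦)
    (h𝒦ne : 𝒦.Nonempty) (hxdag : xdag ∈ 𝒦)
    (P : (Fin d → ℝ) → (Fin d → ℝ))
    (hP : ∀ v, P v ∈ 𝒦 ∧ ∀ w ∈ 𝒦, ∑ l, (v l - P v l) ^ 2 ≤ ∑ l, (v l - w l) ^ 2)
    (S : Fin K → Finset (Fin n))
    (hdisj : ∀ k l : Fin K, k ≠ l → Disjoint (S k) (S l))
    (hcover : (Finset.univ : Finset (Fin K)).biUnion S = Finset.univ)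
    (hcard : ∀ k, (S k).card = m)
    (Le : ℝ) (hLe : 0 < Le)
    (hES : ∀ x ∈ 𝒦,
      (1 / (K : ℝ)) * ∑ k : Fin K, ∑ l : Fin d,
          ((1 / (m : ℝ)) * ∑ i ∈ S k, A i l * A.mulVec (x - xdag) i) ^ 2 ≤
        (Le / n) * ∑ i, (A.mulVec (x - xdag) i) ^ 2)
    (μc : ℝ) (hμ0 : 0 ≤ μc) (hμLe : μc ≤ Le)
    (hRSC : ∀ x ∈ 𝒦, ∀ c : ℝ, 0 ≤ c →
      μc * ∑ l, (c • (x - xdag)) l ^ 2 ≤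
        (1 / (n : ℝ)) * ∑ i, (A.mulVec (c • (x - xdag)) i) ^ 2)
    (x0 : Fin d → ℝ) (hx0 : x0 ∈ 𝒦) (i : ℕ)
    (X : (Fin i → Fin K) → ℕ → (Fin d → ℝ))
    (hX0 : ∀ κ, X κ 0 = x0)
    (hXrec : ∀ κ : Fin i → Fin K, ∀ j : Fin i,
      X κ ((j : ℕ) + 1) = P (fun l => X κ (j : ℕ) l -
        (1 / Le) * ((1 / (m : ℝ)) * ∑ t ∈ S (κ j), A t l * (A.mulVec (X κ (j : ℕ)) t - b t)))) :
    (1 / (K : ℝ) ^ i) * ∑ κ : Fin i → Fin K, Real.sqrt (∑ l, (X κ i l - xdag l) ^ 2) ≤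
      Real.sqrt ((1 - μc / Le) ^ i) * Real.sqrt (∑ l, (x0 l - xdag l) ^ 2) := by
  have hKr : (0:ℝ) < (K:ℝ) := by exact_mod_cast hK
  have hmr : (0:ℝ) < (m:ℝ) := by exact_mod_cast hm
  have hnr : (0:ℝ) < (n:ℝ) := by exact_mod_cast hn
  have hnKmr : (n:ℝ) = (K:ℝ) * (m:ℝ) := by exact_mod_cast hnKm
  have hq0 : 0 ≤ 1 - μc / Le := by
    have : μc / Le ≤ 1 := (div_le_one hLe).mpr hμLe
    linarith
  -- one-step expected decrease
  have step : ∀ x ∈ 𝒦,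
      (∑ k : Fin K, ∑ l, (P (fun l => x l -
          (1 / Le) * ((1 / (m : ℝ)) * ∑ t ∈ S k, A t l * (A.mulVec x t - b t))) l - xdag l) ^ 2)
        ≤ (K : ℝ) * (1 - μc / Le) * ∑ l, (x l - xdag l) ^ 2 := by
    intro x hx
    have hES' := hES x hx
    have hRSC' := hRSC x hx 1 zero_le_one
    set r : Fin n → ℝ := A.mulVec (x - xdag) with hrdef
    have hrt : ∀ t, A.mulVec x t - b t = r t := by
      intro t
      rw [hb, hrdef, Matrix.mulVec_sub]
      simp
    have hrt2 : ∀ t, r t = ∑ l, A t l * (x l - xdag l) := by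
      intro t
      show (A.mulVec (x - xdag)) t = _
      simp [Matrix.mulVec, dotProduct, Pi.sub_apply, mul_sub, Finset.sum_sub_distrib]
    set R := ∑ t, r t ^ 2 with hR
    set D := ∑ l, (x l - xdag l) ^ 2 with hD
    have hR0 : 0 ≤ R := Finset.sum_nonneg fun _ _ => sq_nonneg _
    have hD0 : 0 ≤ D := Finset.sum_nonneg fun _ _ => sq_nonneg _
    have hpart : ∑ k : Fin K, ∑ t ∈ S k, r t ^ 2 = R := by
      rw [hR, ← hcover, Finset.sum_biUnion]
      intro a _ c _ hac
      exact hdisj a c hac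
    have hRSC2 : μc * D ≤ (1 / (n:ℝ)) * R := by
      simpa [one_smul, ← hrdef, ← hR, ← hD] using hRSC'
    -- inner-product computation
    have hT2 : ∀ k : Fin K, (∑ l, (x l - xdag l) * ∑ t ∈ S k, A t l * r t)
        = ∑ t ∈ S k, r t ^ 2 := by
      intro k
      calc ∑ l, (x l - xdag l) * ∑ t ∈ S k, A t l * r t
          = ∑ l, ∑ t ∈ S k, (x l - xdag l) * (A t l * r t) := by
            exact Finset.sum_congr rfl fun l _ => Finset.mul_sum _ _ _
        _ = ∑ t ∈ S k, ∑ l, (x l - xdag l) * (A t l * r t) := Finset.sum_comm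
        _ = ∑ t ∈ S k, r t ^ 2 := by
            refine Finset.sum_congr rfl fun t _ => ?_
            have : ∑ l, (x l - xdag l) * (A t l * r t)
                = (∑ l, A t l * (x l - xdag l)) * r t := by
              rw [Finset.sum_mul]
              exact Finset.sum_congr rfl fun l _ => by ring
            rw [this, ← hrt2]
            ring
    -- expansion of the pre-projection distance
    have hexp : ∀ k : Fin K,
        (∑ l, (x l - (1 / Le) * ((1 / (m : ℝ)) * ∑ t ∈ S k, A t l * r t) - xdag l) ^ 2)
          = D - (2 / (Le * m)) * (∑ t ∈ S k, r t ^ 2)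
            + ∑ l, ((1 / Le) * ((1 / (m : ℝ)) * ∑ t ∈ S k, A t l * r t)) ^ 2 := by
      intro k
      have e1 : ∀ l : Fin d, (x l - (1 / Le) * ((1 / (m : ℝ)) * ∑ t ∈ S k, A t l * r t) - xdag l) ^ 2
          = (x l - xdag l) ^ 2
            - (2 / (Le * m)) * ((x l - xdag l) * ∑ t ∈ S k, A t l * r t)
            + ((1 / Le) * ((1 / (m : ℝ)) * ∑ t ∈ S k, A t l * r t)) ^ 2 := by
        intro l
        field_simp
        ring
      rw [Finset.sum_congr rfl fun l _ => e1 l, Finset.sum_add_distrib, Finset.sum_sub_distrib,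
        ← Finset.mul_sum, hT2 k, hD]
    -- projection contraction per k
    have hproj : ∀ k : Fin K,
        (∑ l, (P (fun l => x l - (1 / Le) * ((1 / (m : ℝ)) * ∑ t ∈ S k, A t l * r t)) l - xdag l) ^ 2)
          ≤ ∑ l, (x l - (1 / Le) * ((1 / (m : ℝ)) * ∑ t ∈ S k, A t l * r t) - xdag l) ^ 2 :=
      fun k => proj_contract h𝒦conv hP _ xdag hxdag
    have hsum1 : (∑ k : Fin K, ∑ l, (P (fun l => x l -
          (1 / Le) * ((1 / (m : ℝ)) * ∑ t ∈ S k, A t l * (A.mulVec x t - b t))) l - xdag l) ^ 2)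
        ≤ (K:ℝ) * D - (2 / (Le * m)) * R
          + (1 / Le)^2 * ∑ k : Fin K, ∑ l : Fin d, ((1 / (m : ℝ)) * ∑ t ∈ S k, A t l * r t) ^ 2 := by
      simp only [hrt]
      calc (∑ k : Fin K, ∑ l, (P (fun l => x l -
              (1 / Le) * ((1 / (m : ℝ)) * ∑ t ∈ S k, A t l * r t)) l - xdag l) ^ 2)
          ≤ ∑ k : Fin K, ∑ l, (x l - (1 / Le) * ((1 / (m : ℝ)) * ∑ t ∈ S k, A t l * r t) - xdag l) ^ 2 :=
            Finset.sum_le_sum fun k _ => hproj k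
        _ = ∑ k : Fin K, (D - (2 / (Le * m)) * (∑ t ∈ S k, r t ^ 2)
              + ∑ l, ((1 / Le) * ((1 / (m : ℝ)) * ∑ t ∈ S k, A t l * r t)) ^ 2) :=
            Finset.sum_congr rfl fun k _ => hexp k
        _ = (K:ℝ) * D - (2 / (Le * m)) * R
              + (1 / Le)^2 * ∑ k : Fin K, ∑ l : Fin d, ((1 / (m : ℝ)) * ∑ t ∈ S k, A t l * r t) ^ 2 := by
            rw [Finset.sum_add_distrib, Finset.sum_sub_distrib, Finset.sum_const, Finset.card_univ,
              Fintype.card_fin, ← Finset.mul_sum, hpart]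
            congr 1
            · rw [nsmul_eq_mul]
            · rw [Finset.mul_sum]
              refine Finset.sum_congr rfl fun k _ => ?_
              rw [Finset.mul_sum]
              exact Finset.sum_congr rfl fun l _ => by ring
    -- expected smoothness bound
    have hQle : (∑ k : Fin K, ∑ l : Fin d, ((1 / (m : ℝ)) * ∑ t ∈ S k, A t l * r t) ^ 2)
        ≤ (K:ℝ) * ((Le / n) * R) := by
      have h := mul_le_mul_of_nonneg_left hES' hKr.le
      rw [← mul_assoc, mul_one_div_cancel hKr.ne', one_mul] at h
      exact h
    -- combine
    have hfin1 : (1 / Le)^2 * ((K:ℝ) * ((Le / n) * R)) = (1 / (Le * m)) * R := by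
      rw [hnKmr]; field_simp
    have hfin2 : ((K:ℝ) * μc / Le) * D ≤ (1 / (Le * m)) * R := by
      have h := mul_le_mul_of_nonneg_left hRSC2 (le_of_lt (div_pos hKr hLe))
      calc ((K:ℝ) * μc / Le) * D = ((K:ℝ)/Le) * (μc * D) := by ring
        _ ≤ ((K:ℝ)/Le) * ((1 / (n:ℝ)) * R) := h
        _ = (1 / (Le * m)) * R := by rw [hnKmr]; field_simp
    have hQle2 : (1 / Le)^2 * (∑ k : Fin K, ∑ l : Fin d, ((1 / (m : ℝ)) * ∑ t ∈ S k, A t l * r t) ^ 2)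
        ≤ (1 / (Le * m)) * R := by
      rw [← hfin1]
      exact mul_le_mul_of_nonneg_left hQle (by positivity)
    calc (∑ k : Fin K, ∑ l, (P (fun l => x l -
            (1 / Le) * ((1 / (m : ℝ)) * ∑ t ∈ S k, A t l * (A.mulVec x t - b t))) l - xdag l) ^ 2)
        ≤ (K:ℝ) * D - (2 / (Le * m)) * R
          + (1 / Le)^2 * ∑ k : Fin K, ∑ l : Fin d, ((1 / (m : ℝ)) * ∑ t ∈ S k, A t l * r t) ^ 2 := hsum1
      _ ≤ (K:ℝ) * D - (2 / (Le * m)) * R + (1 / (Le * m)) * R := by linarith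
      _ = (K:ℝ) * D - (1 / (Le * m)) * R := by ring
      _ ≤ (K:ℝ) * D - ((K:ℝ) * μc / Le) * D := by linarith
      _ = (K : ℝ) * (1 - μc / Le) * D := by ring
  
  -- membership of iterates in 𝒦
  have hmem : ∀ j : ℕ, j ≤ i → ∀ κ, X κ j ∈ 𝒦 := by
    intro j hj κ
    cases j with
    | zero => rw [hX0]; exact hx0
    | succ j =>
      have hji : j < i := hj
      have h : X κ (j + 1) = P (fun l => X κ j l -
          (1 / Le) * ((1 / (m : ℝ)) * ∑ t ∈ S (κ ⟨j, hji⟩), A t l * (A.mulVec (X κ j) t - b t))) :=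
        hXrec κ ⟨j, hji⟩
      rw [h]
      exact (hP _).1
  -- dependence only on earlier coordinates
  have hdep : ∀ j : ℕ, j ≤ i → ∀ κ κ' : Fin i → Fin K,
      (∀ t : Fin i, (t : ℕ) < j → κ t = κ' t) → X κ j = X κ' j := by
    intro j
    induction j with
    | zero => intro _ κ κ' _; rw [hX0, hX0]
    | succ j ih =>
      intro hj κ κ' hagree
      have hji : j < i := hj
      have hXj : X κ j = X κ' j :=
        ih hji.le κ κ' fun t ht => hagree t (ht.trans (Nat.lt_succ_self j))
      have hkj : κ ⟨j, hji⟩ = κ' ⟨j, hji⟩ := hagree ⟨j, hji⟩ (Nat.lt_succ_self j)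
      have h1 : X κ (j + 1) = P (fun l => X κ j l -
          (1 / Le) * ((1 / (m : ℝ)) * ∑ t ∈ S (κ ⟨j, hji⟩), A t l * (A.mulVec (X κ j) t - b t))) :=
        hXrec κ ⟨j, hji⟩
      have h2 : X κ' (j + 1) = P (fun l => X κ' j l -
          (1 / Le) * ((1 / (m : ℝ)) * ∑ t ∈ S (κ' ⟨j, hji⟩), A t l * (A.mulVec (X κ' j) t - b t))) :=
        hXrec κ' ⟨j, hji⟩
      rw [h1, h2, hXj, hkj]
  set q := 1 - μc / Le with hqdef
  set D0 := ∑ l, (x0 l - xdag l) ^ 2 with hD0def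
  have hD00 : 0 ≤ D0 := Finset.sum_nonneg fun _ _ => sq_nonneg _
  -- main induction
  have main : ∀ j : ℕ, j ≤ i →
      (∑ κ : Fin i → Fin K, ∑ l, (X κ j l - xdag l) ^ 2) ≤ q ^ j * (K : ℝ) ^ i * D0 := by
    intro j
    induction j with
    | zero =>
      intro _
      simp only [hX0]
      rw [Finset.sum_const, Finset.card_univ, nsmul_eq_mul]
      have hcard2 : (Fintype.card (Fin i → Fin K) : ℝ) = (K : ℝ) ^ i := by
        rw [Fintype.card_fun, Fintype.card_fin, Fintype.card_fin]; push_cast; rfl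
      rw [hcard2, pow_zero, one_mul]
    | succ j ih =>
      intro hj
      have hji : j < i := hj
      have hsums := ih hji.le
      set jf : Fin i := ⟨j, hji⟩ with hjfdef
      set e := (Equiv.funSplitAt jf (Fin K)) with hedef
      have hsplit : ∀ F : (Fin i → Fin K) → ℝ,
          (∑ κ : Fin i → Fin K, F κ)
            = ∑ ρ : {t : Fin i // t ≠ jf} → Fin K, ∑ k : Fin K, F (e.symm (k, ρ)) := by
        intro F
        rw [← Equiv.sum_comp e.symm F, Fintype.sum_prod_type]
        exact Finset.sum_comm
      have hsymm_at : ∀ (k : Fin K) (ρ : {t : Fin i // t ≠ jf} → Fin K),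
          e.symm (k, ρ) jf = k := by
        intro k ρ
        simp [hedef, Equiv.funSplitAt, Equiv.piSplitAt]
      set k0 : Fin K := ⟨0, hK⟩ with hk0def
      have hYdep : ∀ (k : Fin K) (ρ : {t : Fin i // t ≠ jf} → Fin K),
          X (e.symm (k, ρ)) j = X (e.symm (k0, ρ)) j := by
        intro k ρ
        apply hdep j hji.le
        intro t ht
        have htj : t ≠ jf := by
          intro h
          rw [h] at ht
          exact lt_irrefl j ht
        simp [hedef, Equiv.funSplitAt, Equiv.piSplitAt, htj]
      calc (∑ κ : Fin i → Fin K, ∑ l, (X κ (j + 1) l - xdag l) ^ 2)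
          = ∑ ρ : {t : Fin i // t ≠ jf} → Fin K, ∑ k : Fin K,
              ∑ l, (X (e.symm (k, ρ)) (j + 1) l - xdag l) ^ 2 := hsplit _
        _ = ∑ ρ : {t : Fin i // t ≠ jf} → Fin K, ∑ k : Fin K,
              ∑ l, (P (fun l => X (e.symm (k0, ρ)) j l -
                (1 / Le) * ((1 / (m : ℝ)) * ∑ t ∈ S k,
                  A t l * (A.mulVec (X (e.symm (k0, ρ)) j) t - b t))) l - xdag l) ^ 2 := by
            refine Finset.sum_congr rfl fun ρ _ => Finset.sum_congr rfl fun k _ => ?_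
            have h1 : X (e.symm (k, ρ)) (j + 1) = P (fun l => X (e.symm (k, ρ)) j l -
                (1 / Le) * ((1 / (m : ℝ)) * ∑ t ∈ S ((e.symm (k, ρ)) jf),
                  A t l * (A.mulVec (X (e.symm (k, ρ)) j) t - b t))) :=
              hXrec _ jf
            rw [h1, hsymm_at k ρ, hYdep k ρ]
        _ ≤ ∑ ρ : {t : Fin i // t ≠ jf} → Fin K,
              (K : ℝ) * q * ∑ l, (X (e.symm (k0, ρ)) j l - xdag l) ^ 2 :=
            Finset.sum_le_sum fun ρ _ => step _ (hmem j hji.le _)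
        _ = q * ∑ ρ : {t : Fin i // t ≠ jf} → Fin K, ∑ k : Fin K,
              ∑ l, (X (e.symm (k, ρ)) j l - xdag l) ^ 2 := by
            rw [Finset.mul_sum]
            refine Finset.sum_congr rfl fun ρ _ => ?_
            have hconst : (∑ k : Fin K, ∑ l, (X (e.symm (k, ρ)) j l - xdag l) ^ 2)
                = (K : ℝ) * ∑ l, (X (e.symm (k0, ρ)) j l - xdag l) ^ 2 := by
              rw [show (∑ k : Fin K, ∑ l, (X (e.symm (k, ρ)) j l - xdag l) ^ 2)
                  = ∑ _k : Fin K, ∑ l, (X (e.symm (k0, ρ)) j l - xdag l) ^ 2 from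
                Finset.sum_congr rfl fun k _ => by rw [hYdep k ρ]]
              rw [Finset.sum_const, Finset.card_univ, Fintype.card_fin, nsmul_eq_mul]
            rw [hconst]
            ring
        _ = q * ∑ κ : Fin i → Fin K, ∑ l, (X κ j l - xdag l) ^ 2 := by
            rw [← hsplit fun κ => ∑ l, (X κ j l - xdag l) ^ 2]
        _ ≤ q * (q ^ j * (K : ℝ) ^ i * D0) := mul_le_mul_of_nonneg_left hsums hq0
        _ = q ^ (j + 1) * (K : ℝ) ^ i * D0 := by ring
  -- conclude via Cauchy–Schwarz
  have hfinal := main i le_rfl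
  set T := ∑ κ : Fin i → Fin K, Real.sqrt (∑ l, (X κ i l - xdag l) ^ 2) with hTdef
  have hT0 : 0 ≤ T := Finset.sum_nonneg fun _ _ => Real.sqrt_nonneg _
  have hcard2 : (Fintype.card (Fin i → Fin K) : ℝ) = (K : ℝ) ^ i := by
    rw [Fintype.card_fun, Fintype.card_fin, Fintype.card_fin]; push_cast; rfl
  have hcs : T ^ 2 ≤ (K : ℝ) ^ i * ∑ κ : Fin i → Fin K, ∑ l, (X κ i l - xdag l) ^ 2 := by
    have h := sq_sum_le_card_mul_sum_sq (s := (Finset.univ : Finset (Fin i → Fin K)))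
      (f := fun κ => Real.sqrt (∑ l, (X κ i l - xdag l) ^ 2))
    rw [Finset.card_univ] at h
    calc T ^ 2 ≤ (Fintype.card (Fin i → Fin K) : ℝ) *
          ∑ κ : Fin i → Fin K, Real.sqrt (∑ l, (X κ i l - xdag l) ^ 2) ^ 2 := h
      _ = (K : ℝ) ^ i * ∑ κ : Fin i → Fin K, ∑ l, (X κ i l - xdag l) ^ 2 := by
          rw [hcard2]
          congr 1
          exact Finset.sum_congr rfl fun κ _ =>
            Real.sq_sqrt (Finset.sum_nonneg fun _ _ => sq_nonneg _)
  have hT2 : T ^ 2 ≤ ((K : ℝ) ^ i) ^ 2 * (q ^ i * D0) := by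
    calc T ^ 2 ≤ (K : ℝ) ^ i * (q ^ i * (K : ℝ) ^ i * D0) :=
        le_trans hcs (mul_le_mul_of_nonneg_left hfinal (by positivity))
      _ = ((K : ℝ) ^ i) ^ 2 * (q ^ i * D0) := by ring
  have hqi0 : 0 ≤ q ^ i := pow_nonneg hq0 i
  have hTle : T ≤ (K : ℝ) ^ i * (Real.sqrt (q ^ i) * Real.sqrt D0) := by
    have h1 : (K : ℝ) ^ i * (Real.sqrt (q ^ i) * Real.sqrt D0)
        = Real.sqrt (((K : ℝ) ^ i) ^ 2 * (q ^ i * D0)) := by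
      rw [Real.sqrt_mul (by positivity), Real.sqrt_sq (by positivity), Real.sqrt_mul hqi0]
    rw [h1]
    exact (Real.le_sqrt hT0 (by positivity)).mpr hT2
  calc (1 / (K : ℝ) ^ i) * T
      ≤ (1 / (K : ℝ) ^ i) * ((K : ℝ) ^ i * (Real.sqrt (q ^ i) * Real.sqrt D0)) :=
        mul_le_mul_of_nonneg_left hTle (by positivity)
    _ = Real.sqrt (q ^ i) * Real.sqrt D0 := by field_simp
end

section
/- Let C ⊆ ℝ^d be a nonempty closed convex cone and let P_C denote the metric projection onto C. Then for every v ∈ ℝ^d, ‖P_C(v)‖₂ = sup{⟨u, v⟩ : u ∈ C, ‖u‖₂ ≤ 1}. -/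
open scoped RealInnerProductSpace

lemma aux_var_ineq {F : Type*} [NormedAddCommGroup F] [InnerProductSpace ℝ F]
    {K : Set F} (hK : Convex ℝ K) {u v : F} (hv : v ∈ K)
    (hmin : ∀ w ∈ K, ‖u - v‖ ≤ ‖u - w‖) : ∀ w ∈ K, ⟪u - v, w - v⟫ ≤ 0 := by
  haveI : Nonempty K := ⟨⟨v, hv⟩⟩
  refine (norm_eq_iInf_iff_real_inner_le_zero hK hv).mp ?_
  refine le_antisymm (le_ciInf fun w => hmin w w.2) ?_
  have hbdd : BddBelow (Set.range fun w : K => ‖u - (w : F)‖) :=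
    ⟨0, by rintro x ⟨w, rfl⟩; exact norm_nonneg _⟩
  exact ciInf_le hbdd ⟨v, hv⟩


/-- For a nonempty closed convex cone `C ⊆ ℝ^d` with metric projection
`P_C`, the Euclidean norm of the projection of any `v` equals the supremum of `⟨u, v⟩`
over `u ∈ C` with `‖u‖₂ ≤ 1`. -/
theorem cone_projection_norm_eq_sSup {d : ℕ}
    (C : Set (Fin d → ℝ)) (hCne : C.Nonempty) (hCclosed : IsClosed C)
    (hCconv : Convex ℝ C)
    (hCcone : ∀ c : ℝ, 0 ≤ c → ∀ x ∈ C, c • x ∈ C)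
    (P : (Fin d → ℝ) → (Fin d → ℝ))
    (hP : ∀ v, P v ∈ C ∧ ∀ w ∈ C, ∑ l, (v l - P v l) ^ 2 ≤ ∑ l, (v l - w l) ^ 2) :
    ∀ v : Fin d → ℝ,
      Real.sqrt (∑ l, (P v l) ^ 2) =
        sSup ((fun u : Fin d → ℝ => ∑ l, u l * v l) ''
          {u | u ∈ C ∧ Real.sqrt (∑ l, (u l) ^ 2) ≤ 1}) := by
  intro v
  classical
  obtain ⟨hPvC, hPmin⟩ := hP v
  have h0C : (0 : Fin d → ℝ) ∈ C := by
    obtain ⟨x, hx⟩ := hCne; simpa using hCcone 0 le_rfl x hx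
  have hnorm : ∀ x : EuclideanSpace ℝ (Fin d), ‖x‖ = Real.sqrt (∑ l, x l ^ 2) := fun x => by
    rw [EuclideanSpace.norm_eq]; simp [sq]
  have hinner : ∀ x y : EuclideanSpace ℝ (Fin d), ⟪x, y⟫ = ∑ l, x l * y l := fun x y => by
    simp [PiLp.inner_apply, RCLike.inner_apply, mul_comm]
  let K : Set (EuclideanSpace ℝ (Fin d)) := {x | WithLp.ofLp x ∈ C}
  have hKconv : Convex ℝ K := fun x hx y hy a b ha hb hab => hCconv hx hy ha hb hab
  let ve : EuclideanSpace ℝ (Fin d) := WithLp.toLp 2 v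
  let p : EuclideanSpace ℝ (Fin d) := WithLp.toLp 2 (P v)
  have hpK : p ∈ K := hPvC
  have hle : ∀ w ∈ K, ‖ve - p‖ ≤ ‖ve - w‖ := by
    intro w hw
    rw [hnorm, hnorm]
    exact Real.sqrt_le_sqrt (hPmin w hw)
  have hVI : ∀ w ∈ K, ⟪ve - p, w - p⟫ ≤ 0 := aux_var_ineq hKconv hpK hle
  have h2p : ((2 : ℝ) • p : EuclideanSpace ℝ (Fin d)) ∈ K := hCcone 2 (by norm_num) _ hPvC
  have horth : ⟪ve - p, p⟫ = 0 := by
    have h1 := hVI _ h2p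
    have h2 := hVI 0 h0C
    have e1 : ((2 : ℝ) • p : EuclideanSpace ℝ (Fin d)) - p = p := by module
    rw [e1] at h1
    rw [zero_sub, inner_neg_right] at h2
    linarith
  have hub : ∀ y ∈ ((fun u : Fin d → ℝ => ∑ l, u l * v l) ''
      {u | u ∈ C ∧ Real.sqrt (∑ l, (u l) ^ 2) ≤ 1}), y ≤ ‖p‖ := by
    rintro y ⟨u, ⟨huC, hu1⟩, rfl⟩
    let ue : EuclideanSpace ℝ (Fin d) := WithLp.toLp 2 u
    have hu1' : ‖ue‖ ≤ 1 := by rw [hnorm]; exact hu1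
    show (∑ l, u l * v l) ≤ ‖p‖
    have hval : (∑ l, u l * v l) = ⟪ue, ve⟫ := (hinner ue ve).symm
    rw [hval]
    have hsplit : ⟪ue, ve⟫ = ⟪ue, p⟫ + ⟪ve - p, ue - p⟫ + ⟪ve - p, p⟫ := by
      simp only [inner_sub_left, inner_sub_right, real_inner_comm ve ue, real_inner_comm ve p, real_inner_comm ue p]
      ring
    rw [hsplit, horth, add_zero]
    have h1 : ⟪ue, p⟫ ≤ ‖p‖ := by
      calc ⟪ue, p⟫ ≤ ‖ue‖ * ‖p‖ := real_inner_le_norm _ _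
        _ ≤ 1 * ‖p‖ := mul_le_mul_of_nonneg_right hu1' (norm_nonneg _)
        _ = ‖p‖ := one_mul _
    have h2 : ⟪ve - p, ue - p⟫ ≤ 0 := hVI _ huC
    linarith
  have hpv : ⟪p, ve⟫ = ‖p‖ ^ 2 := by
    have h : ⟪p, ve⟫ = ⟪p, p⟫ + ⟪ve - p, p⟫ := by
      rw [inner_sub_left, real_inner_comm ve p]; ring
    rw [h, horth, add_zero, real_inner_self_eq_norm_sq]
  have hmem : ‖p‖ ∈ ((fun u : Fin d → ℝ => ∑ l, u l * v l) ''
      {u | u ∈ C ∧ Real.sqrt (∑ l, (u l) ^ 2) ≤ 1}) := by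
    by_cases hp : ‖p‖ = 0
    · refine ⟨0, ⟨h0C, by simp⟩, by simp [hp]⟩
    · refine ⟨‖p‖⁻¹ • P v, ⟨hCcone _ (inv_nonneg.2 (norm_nonneg _)) _ hPvC, ?_⟩, ?_⟩
      · show Real.sqrt (∑ l, ((‖p‖⁻¹ • p : EuclideanSpace ℝ (Fin d))) l ^ 2) ≤ 1
        rw [← hnorm, norm_smul]
        simp [abs_of_nonneg (inv_nonneg.2 (norm_nonneg p)), inv_mul_cancel₀ hp]
      · show (∑ l, ((‖p‖⁻¹ • p : EuclideanSpace ℝ (Fin d))) l * v l) = ‖p‖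
        rw [← hinner, real_inner_smul_left, hpv]
        field_simp
  have hgoal : Real.sqrt (∑ l, (P v l) ^ 2) = ‖p‖ := (hnorm p).symm
  rw [hgoal]
  exact le_antisymm (le_csSup ⟨‖p‖, hub⟩ hmem) (csSup_le ⟨_, hmem⟩ hub)
end

section
/- Let D ⊆ ℝ^d be a nonempty closed convex set with 0 ∈ D, and let C ⊆ ℝ^d be a closed convex cone with D ⊆ C. Then for every v ∈ ℝ^d, ‖P_D(v)‖₂ ≤ ‖P_C(v)‖₂, where P_D and P_C denote the Euclidean metric projections onto D and C respectively. -/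
open scoped RealInnerProductSpace

private lemma var_ineq {F : Type*} [NormedAddCommGroup F] [InnerProductSpace ℝ F]
    {K : Set F} (hK : Convex ℝ K) {v p : F} (hp : p ∈ K)
    (hmin : ∀ w ∈ K, ‖v - p‖ ≤ ‖v - w‖) :
    ∀ w ∈ K, ⟪v - p, w - p⟫ ≤ 0 := by
  apply (norm_eq_iInf_iff_real_inner_le_zero hK hp).mp
  haveI : Nonempty K := ⟨⟨p, hp⟩⟩
  refine le_antisymm (le_ciInf fun w => hmin w w.2) (ciInf_le ?_ (⟨p, hp⟩ : K))
  exact ⟨0, by rintro x ⟨w, rfl⟩; exact norm_nonneg _⟩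

private lemma euc_norm_sum {d : ℕ} (x : EuclideanSpace ℝ (Fin d)) :
    ‖x‖ = Real.sqrt (∑ l, (x l) ^ 2) := by
  rw [EuclideanSpace.norm_eq]
  simp [sq_abs]

/-- If `D ⊆ ℝ^d` is a nonempty closed convex set containing `0` and
`C ⊇ D` is a closed convex cone, then the Euclidean metric projections satisfy
`‖P_D(v)‖₂ ≤ ‖P_C(v)‖₂` for every `v`. -/
theorem projection_norm_le_cone_projection_norm {d : ℕ}
    (D C : Set (Fin d → ℝ))
    (hDne : D.Nonempty) (hDclosed : IsClosed D) (hDconv : Convex ℝ D)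
    (hD0 : (0 : Fin d → ℝ) ∈ D)
    (hCclosed : IsClosed C) (hCconv : Convex ℝ C)
    (hCcone : ∀ c : ℝ, 0 ≤ c → ∀ x ∈ C, c • x ∈ C)
    (hDC : D ⊆ C)
    (PD PC : (Fin d → ℝ) → (Fin d → ℝ))
    (hPD : ∀ v, PD v ∈ D ∧ ∀ w ∈ D, ∑ l, (v l - PD v l) ^ 2 ≤ ∑ l, (v l - w l) ^ 2)
    (hPC : ∀ v, PC v ∈ C ∧ ∀ w ∈ C, ∑ l, (v l - PC v l) ^ 2 ≤ ∑ l, (v l - w l) ^ 2) :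
    ∀ v : Fin d → ℝ,
      Real.sqrt (∑ l, (PD v l) ^ 2) ≤ Real.sqrt (∑ l, (PC v l) ^ 2) := by
  intro v
  set E := EuclideanSpace ℝ (Fin d)
  -- reinterpret everything in E
  let D' : Set E := WithLp.ofLp ⁻¹' D
  let C' : Set E := WithLp.ofLp ⁻¹' C
  let v' : E := WithLp.toLp 2 v
  let p : E := WithLp.toLp 2 (PD v)
  let q : E := WithLp.toLp 2 (PC v)
  have hnorm : ∀ x y : E, ‖x - y‖ = Real.sqrt (∑ l, (x l - y l) ^ 2) := by
    intro x y
    rw [euc_norm_sum]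
    rfl
  have hD' : Convex ℝ D' := hDconv.linear_preimage (WithLp.linearEquiv 2 ℝ (Fin d → ℝ)).toLinearMap
  have hC' : Convex ℝ C' := hCconv.linear_preimage (WithLp.linearEquiv 2 ℝ (Fin d → ℝ)).toLinearMap
  have hpD : p ∈ D' := (hPD v).1
  have hqC : q ∈ C' := (hPC v).1
  have hminD : ∀ w ∈ D', ‖v' - p‖ ≤ ‖v' - w‖ := by
    intro w hw
    rw [hnorm, hnorm]
    exact Real.sqrt_le_sqrt ((hPD v).2 w hw)
  have hminC : ∀ w ∈ C', ‖v' - q‖ ≤ ‖v' - w‖ := by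
    intro w hw
    rw [hnorm, hnorm]
    exact Real.sqrt_le_sqrt ((hPC v).2 w hw)
  have hVD := var_ineq hD' hpD hminD
  have hVC := var_ineq hC' hqC hminC
  -- cone facts
  have h0C : (0 : E) ∈ C' := by show WithLp.ofLp (0 : E) ∈ C; rw [WithLp.ofLp_zero]; exact hDC hD0
  have h2q : ((2 : ℝ) • q : E) ∈ C' := by show WithLp.ofLp ((2 : ℝ) • q) ∈ C; rw [WithLp.ofLp_smul]; exact hCcone 2 (by norm_num) _ hqC
  -- ⟪v - q, q⟫ = 0
  have hq0 : ⟪v' - q, q⟫ = 0 := by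
    have h1 := hVC 0 h0C
    have h2 := hVC ((2 : ℝ) • q) h2q
    rw [zero_sub, inner_neg_right] at h1
    have : ((2 : ℝ) • q : E) - q = q := by rw [two_smul]; abel
    rw [this] at h2
    linarith
  -- ⟪v - q, p⟫ ≤ 0
  have hqp : ⟪v' - q, p⟫ ≤ 0 := by
    have := hVC p (hDC hpD)
    have hsplit : ⟪v' - q, p⟫ = ⟪v' - q, p - q⟫ + ⟪v' - q, q⟫ := by
      rw [← inner_add_right]
      congr 1
      abel
    rw [hsplit, hq0, add_zero]
    exact this
  -- ‖p‖² ≤ ⟪v, p⟫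
  have hp2 : ‖p‖ ^ 2 ≤ ⟪v', p⟫ := by
    have := hVD 0 (by show WithLp.ofLp (0 : E) ∈ D; rw [WithLp.ofLp_zero]; exact hD0)
    rw [zero_sub, inner_neg_right, inner_sub_left] at this
    have hpp : ⟪p, p⟫ = ‖p‖ ^ 2 := real_inner_self_eq_norm_sq p
    linarith
  -- ⟪v, p⟫ ≤ ⟪q, p⟫
  have hvq : ⟪v', p⟫ ≤ ⟪q, p⟫ := by
    rw [inner_sub_left] at hqp; linarith
  have hCS : ⟪q, p⟫ ≤ ‖q‖ * ‖p‖ := real_inner_le_norm q p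
  have key : ‖p‖ ≤ ‖q‖ := by
    rcases eq_or_lt_of_le (norm_nonneg p) with h | h
    · rw [← h]; exact norm_nonneg q
    · have : ‖p‖ * ‖p‖ ≤ ‖q‖ * ‖p‖ := by nlinarith
      exact le_of_mul_le_mul_right this h
  calc Real.sqrt (∑ l, (PD v l) ^ 2) = ‖p‖ := (euc_norm_sum p).symm
    _ ≤ ‖q‖ := key
    _ = Real.sqrt (∑ l, (PC v l) ^ 2) := euc_norm_sum q
end
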